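/- arXiv:1902.08952 — 11 statements merged into one kernel-verified Lean document; each statement's English description precedes it below -/
import Mathlib

section
/- Let φ: ℝ² → ℝ³, φ(s,t) = (t, γ¹(s,t), γ²(s,t)), be a smooth, proper, timelike immersion into (1+2)-Minkowski space, where γ = (γ¹,γ²): ℝ² → ℝ² satisfies ⟨γ_s, γ_t⟩ = 0, |γ_s|² + |γ_t|² = 1 and γ_tt − γ_ss = 0 everywhere (equivalently, φ is of this form with γ_s(s,t) ≠ 0 for all (s,t)). Define a_±(s) = γ_t(s,0) ± γ_s(s,0). Then a_+(ξ) ≠ a_-(η) for all ξ, η ∈ ℝ. -/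
noncomputable section
open Real Set Filter
open scoped ContDiff

/-- The Minkowski bilinear form η on ℝ^{1+2} ≅ ℝ × ℝ × ℝ,
    η(x,y) = −x⁰y⁰ + x¹y¹ + x²y². -/
def eta (x y : ℝ × ℝ × ℝ) : ℝ := -(x.1 * y.1) + x.2.1 * y.2.1 + x.2.2 * y.2.2

/-- Partial derivative of φ in the first (s) variable. -/
def pd1 (φ : ℝ × ℝ → ℝ × ℝ × ℝ) (p : ℝ × ℝ) : ℝ × ℝ × ℝ := fderiv ℝ φ p (1, 0)

/-- Partial derivative of φ in the second (t) variable. -/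
def pd2 (φ : ℝ × ℝ → ℝ × ℝ × ℝ) (p : ℝ × ℝ) : ℝ × ℝ × ℝ := fderiv ℝ φ p (0, 1)

/-- Entry g₁₁ of the induced metric. -/
def gE (φ : ℝ × ℝ → ℝ × ℝ × ℝ) (p : ℝ × ℝ) : ℝ := eta (pd1 φ p) (pd1 φ p)
/-- Entry g₁₂ = g₂₁ of the induced metric. -/
def gF (φ : ℝ × ℝ → ℝ × ℝ × ℝ) (p : ℝ × ℝ) : ℝ := eta (pd1 φ p) (pd2 φ p)
/-- Entry g₂₂ of the induced metric. -/
def gG (φ : ℝ × ℝ → ℝ × ℝ × ℝ) (p : ℝ × ℝ) : ℝ := eta (pd2 φ p) (pd2 φ p)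

/-- Determinant of the induced metric. -/
def detg (φ : ℝ × ℝ → ℝ × ℝ × ℝ) (p : ℝ × ℝ) : ℝ := gE φ p * gG φ p - (gF φ p) ^ 2

/-- φ is timelike: det g < 0 everywhere. -/
def Timelike (φ : ℝ × ℝ → ℝ × ℝ × ℝ) : Prop := ∀ p, detg φ p < 0

/-- φ is an immersion: dφ has rank 2 everywhere. -/
def ImmersionR2 (φ : ℝ × ℝ → ℝ × ℝ × ℝ) : Prop :=
  ∀ p, LinearIndependent ℝ ![pd1 φ p, pd2 φ p]

/-- Euclidean inner product on ℝ². -/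
def dot2 (a b : ℝ × ℝ) : ℝ := a.1 * b.1 + a.2 * b.2

/-- Squared Euclidean norm on ℝ². -/
def nsq (a : ℝ × ℝ) : ℝ := dot2 a a

/-- Derivative of the map `q ↦ (dγ q) w`. -/
lemma hasFDerivAt_fderiv_apply {γ : ℝ × ℝ → ℝ × ℝ} (hs : ContDiff ℝ ∞ γ)
    (w p : ℝ × ℝ) :
    HasFDerivAt (fun q => fderiv ℝ γ q w)
      ((fderiv ℝ (fderiv ℝ γ) p).flip w) p := by
  have h1 : ContDiff ℝ ∞ (fderiv ℝ γ) := hs.fderiv_right (by simp)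
  have h2 : HasFDerivAt (fderiv ℝ γ) (fderiv ℝ (fderiv ℝ γ) p) p :=
    (h1.differentiable (by simp) p).hasFDerivAt
  simpa using h2.clm_apply (hasFDerivAt_const w p)

lemma fderiv_fderiv_apply {γ : ℝ × ℝ → ℝ × ℝ} (hs : ContDiff ℝ ∞ γ)
    (w p v : ℝ × ℝ) :
    fderiv ℝ (fun q => fderiv ℝ γ q w) p v = fderiv ℝ (fderiv ℝ γ) p v w := by
  rw [(hasFDerivAt_fderiv_apply hs w p).fderiv]; rfl

/-- A map with vanishing derivative in direction `d` is constant along lines in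
direction `d`. -/
lemma const_along {F : ℝ × ℝ → ℝ × ℝ} {F' : ℝ × ℝ → (ℝ × ℝ →L[ℝ] ℝ × ℝ)} (d : ℝ × ℝ)
    (hF : ∀ p, HasFDerivAt F (F' p) p)
    (h0 : ∀ p, F' p d = 0) (p : ℝ × ℝ) (r : ℝ) :
    F (p + r • d) = F p := by
  have key : ∀ x : ℝ, HasDerivAt (fun r : ℝ => F (p + r • d)) 0 x := by
    intro x
    have hline : HasDerivAt (fun r : ℝ => p + r • d) d x := by
      simpa using ((hasDerivAt_id x).smul_const d).const_add p
    have h := (hF (p + x • d)).comp_hasDerivAt x hline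
    rw [h0] at h
    exact h
  have hconst := is_const_of_deriv_eq_zero
    (fun x => (key x).differentiableAt) (fun x => (key x).deriv) r 0
  simpa using hconst

/-- For a smooth proper timelike immersion in isothermal gauge,
the images of the outgoing and incoming null directions along the initial curve
are disjoint: a_+(ξ) ≠ a_-(η) for all ξ, η. -/
theorem null_directions_disjoint
    (γ : ℝ × ℝ → ℝ × ℝ)
    (φ : ℝ × ℝ → ℝ × ℝ × ℝ)
    (hform : ∀ p : ℝ × ℝ, φ p = (p.2, γ p))
    (hsmooth : ContDiff ℝ ∞ γ)
    (hproper : IsProperMap φ)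
    (htimelike : Timelike φ)
    (himm : ∀ p : ℝ × ℝ, fderiv ℝ γ p (1, 0) ≠ 0)
    (horth : ∀ p : ℝ × ℝ, dot2 (fderiv ℝ γ p (1, 0)) (fderiv ℝ γ p (0, 1)) = 0)
    (hnorm : ∀ p : ℝ × ℝ, nsq (fderiv ℝ γ p (1, 0)) + nsq (fderiv ℝ γ p (0, 1)) = 1)
    (hwave : ∀ p : ℝ × ℝ,
      fderiv ℝ (fun q => fderiv ℝ γ q (0, 1)) p (0, 1) -
      fderiv ℝ (fun q => fderiv ℝ γ q (1, 0)) p (1, 0) = 0) :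
    ∀ ξ η : ℝ,
      fderiv ℝ γ (ξ, 0) (0, 1) + fderiv ℝ γ (ξ, 0) (1, 0) ≠
      fderiv ℝ γ (η, 0) (0, 1) - fderiv ℝ γ (η, 0) (1, 0) := by
  intro ξ η hcon
  set B : ℝ × ℝ → (ℝ × ℝ →L[ℝ] ℝ × ℝ →L[ℝ] ℝ × ℝ) := fderiv ℝ (fderiv ℝ γ) with hB
  have hsymm : ∀ p v w, B p v w = B p w v := fun p v w =>
    (hsmooth.contDiffAt.isSymmSndFDerivAt (by simp [minSmoothness_of_isRCLikeNormedField]; exact WithTop.coe_le_coe.mpr le_top)).eq v w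
  have hw : ∀ p, B p (0,1) (0,1) = B p (1,0) (1,0) := by
    intro p
    have h := hwave p
    rw [fderiv_fderiv_apply hsmooth _ _ _, fderiv_fderiv_apply hsmooth _ _ _] at h
    exact sub_eq_zero.mp h
  -- the two null-direction fields
  set F : ℝ × ℝ → ℝ × ℝ := fun p => fderiv ℝ γ p (0,1) + fderiv ℝ γ p (1,0) with hF
  set G : ℝ × ℝ → ℝ × ℝ := fun p => fderiv ℝ γ p (0,1) - fderiv ℝ γ p (1,0) with hG
  have hFd : ∀ p, HasFDerivAt F ((B p).flip (0,1) + (B p).flip (1,0)) p := fun p =>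
    (hasFDerivAt_fderiv_apply hsmooth (0,1) p).add (hasFDerivAt_fderiv_apply hsmooth (1,0) p)
  have hGd : ∀ p, HasFDerivAt G ((B p).flip (0,1) - (B p).flip (1,0)) p := fun p =>
    (hasFDerivAt_fderiv_apply hsmooth (0,1) p).sub (hasFDerivAt_fderiv_apply hsmooth (1,0) p)
  have hsplit : ∀ p : ℝ × ℝ, ∀ a b : ℝ, B p (a, b) = a • B p (1,0) + b • B p (0,1) := by
    intro p a b
    have : (a, b) = a • ((1:ℝ),(0:ℝ)) + b • ((0:ℝ),(1:ℝ)) := by simp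
    rw [this, map_add, map_smul, map_smul]
  have hF0 : ∀ p, ((B p).flip (0,1) + (B p).flip (1,0)) ((1 : ℝ), (-1 : ℝ)) = 0 := by
    intro p
    have h1 : ((1:ℝ), (-1:ℝ)) = ((1:ℝ),(0:ℝ)) - ((0:ℝ),(1:ℝ)) := by norm_num
    rw [ContinuousLinearMap.add_apply, ContinuousLinearMap.flip_apply,
      ContinuousLinearMap.flip_apply, h1, map_sub, ContinuousLinearMap.sub_apply,
      ContinuousLinearMap.sub_apply, hsymm p (1,0) (0,1), hw p]
    abel
  have hG0 : ∀ p, ((B p).flip (0,1) - (B p).flip (1,0)) ((1 : ℝ), (1 : ℝ)) = 0 := by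
    intro p
    have h1 : ((1:ℝ), (1:ℝ)) = ((1:ℝ),(0:ℝ)) + ((0:ℝ),(1:ℝ)) := by norm_num
    rw [ContinuousLinearMap.sub_apply, ContinuousLinearMap.flip_apply,
      ContinuousLinearMap.flip_apply, h1, map_add, ContinuousLinearMap.add_apply,
      ContinuousLinearMap.add_apply, hsymm p (1,0) (0,1), hw p]
    abel
  set s : ℝ := (ξ + η) / 2 with hs
  set t : ℝ := (ξ - η) / 2 with ht
  have hFc : F (s, t) = F (ξ, 0) := by
    have h := const_along (F := F) (1, -1) hFd hF0 (ξ, 0) (-t)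
    have he : ((ξ:ℝ), (0:ℝ)) + (-t) • ((1:ℝ), (-1:ℝ)) = (s, t) := by
      simp only [Prod.smul_mk, Prod.mk_add_mk, smul_eq_mul, Prod.mk.injEq, hs, ht]
      constructor <;> ring
    rwa [he] at h
  have hGc : G (s, t) = G (η, 0) := by
    have h := const_along (F := G) (1, 1) hGd hG0 (η, 0) t
    have he : ((η:ℝ), (0:ℝ)) + t • ((1:ℝ), (1:ℝ)) = (s, t) := by
      simp only [Prod.smul_mk, Prod.mk_add_mk, smul_eq_mul, Prod.mk.injEq, hs, ht]
      constructor <;> ring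
    rwa [he] at h
  have hFG : F (s, t) = G (s, t) := by rw [hFc, hGc]; exact hcon
  simp only [hF, hG] at hFG
  set u : ℝ × ℝ := fderiv ℝ γ (s, t) (1, 0) with hu
  set v : ℝ × ℝ := fderiv ℝ γ (s, t) (0, 1) with hv
  have huu : u + u = 0 := by
    have h2 : u + u = (v + u) - (v - u) := by abel
    rw [hFG] at h2
    simpa using h2
  have h2 : (2 : ℝ) • u = 0 := by rw [two_smul]; exact huu
  rcases smul_eq_zero.mp h2 with h | h
  · norm_num at h
  · exact himm (s, t) h
end
end

section
/- Let M > 0 and let a_+, a_-: [−M,M] → ℝ² be smooth functions satisfying |a_+(s)| = |a_-(s)| = 1 for all s and a_+(ξ) ≠ a_-(η) for all ξ, η ∈ [−M,M]. Then there exists ω ∈ ℝ² with |ω| = 1 such that ⟨a_+(ξ) − a_-(η), ω⟩ > 0 for all ξ, η ∈ [−M,M]. -/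
noncomputable section
open Real Set
open scoped ContDiff

open MeasureTheory intervalIntegral in
lemma circle_lift (M : ℝ) (hM : 0 < M) (f : ℝ → ℝ × ℝ)
    (hf : ContDiffOn ℝ ∞ f (Set.Icc (-M) M))
    (hunit : ∀ s ∈ Set.Icc (-M) M, dot2 (f s) (f s) = 1) :
    ∃ θ : ℝ → ℝ, ContinuousOn θ (Set.Icc (-M) M) ∧
      ∀ s ∈ Set.Icc (-M) M, f s = (Real.cos (θ s), Real.sin (θ s)) := by
  have hMM : (-M : ℝ) < M := by linarith
  set I : Set ℝ := Set.Icc (-M) M with hIdef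
  have hUD : UniqueDiffOn ℝ I := uniqueDiffOn_Icc hMM
  set z : ℝ → ℂ := fun s => ((f s).1 : ℂ) + ((f s).2 : ℂ) * Complex.I with hzdef
  have hz : ContDiffOn ℝ ∞ z I := by
    apply ContDiffOn.add
    · exact Complex.ofRealCLM.contDiff.comp_contDiffOn hf.fst
    · exact (Complex.ofRealCLM.contDiff.comp_contDiffOn hf.snd).mul contDiffOn_const
  set z' : ℝ → ℂ := fun s => derivWithin z I s with hz'def
  have hzdiff : ∀ s ∈ I, HasDerivWithinAt z (z' s) I s := fun s hs =>
    ((hz.differentiableOn (by norm_num)) s hs).hasDerivWithinAt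
  have hz'c : ContinuousOn z' I := (hz.derivWithin (m := 0) hUD (by norm_num)).continuousOn
  have hnormSq : ∀ s ∈ I, Complex.normSq (z s) = 1 := by
    intro s hs
    have := hunit s hs
    simp only [dot2] at this
    simp [hzdef, Complex.normSq_apply]
    nlinarith [this]
  have hre : ∀ s ∈ I, ((starRingEnd ℂ) (z s) * z' s).re = 0 := by
    intro s hs
    have hR : HasDerivWithinAt (fun t => (z t).re) ((z' s).re) I s :=
      (Complex.reCLM.hasFDerivAt).comp_hasDerivWithinAt s (hzdiff s hs)
    have hIm : HasDerivWithinAt (fun t => (z t).im) ((z' s).im) I s :=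
      (Complex.imCLM.hasFDerivAt).comp_hasDerivWithinAt s (hzdiff s hs)
    have hn : HasDerivWithinAt (fun t => (z t).re * (z t).re + (z t).im * (z t).im)
        ((z' s).re * (z s).re + (z s).re * (z' s).re
          + ((z' s).im * (z s).im + (z s).im * (z' s).im)) I s :=
      (hR.mul hR).add (hIm.mul hIm)
    have hconst : derivWithin (fun t => (z t).re * (z t).re + (z t).im * (z t).im) I s = 0 := by
      have : ∀ t ∈ I, (z t).re * (z t).re + (z t).im * (z t).im = 1 := by
        intro t ht
        have := hnormSq t ht
        simpa [Complex.normSq_apply] using this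
      rw [derivWithin_congr this (this s hs)]
      exact (hasDerivWithinAt_const s I (1:ℝ)).derivWithin (hUD s hs)
    have h0 := hn.derivWithin (hUD s hs)
    rw [hconst] at h0
    simp only [Complex.mul_re, Complex.conj_re, Complex.conj_im]
    nlinarith [h0]
  set g : ℝ → ℝ := fun s => ((starRingEnd ℂ) (z s) * z' s).im with hgdef
  have hgc : ContinuousOn g I :=
    Complex.continuous_im.comp_continuousOn
      (((Complex.continuous_conj).comp_continuousOn hz.continuousOn).mul hz'c)
  have hzeq : ∀ s ∈ I, z' s = (g s : ℂ) * Complex.I * z s := by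
    intro s hs
    have h1 : (starRingEnd ℂ) (z s) * z' s = (g s : ℂ) * Complex.I := by
      apply Complex.ext
      · simpa using hre s hs
      · simp [hgdef]
    calc z' s = (Complex.normSq (z s) : ℂ) * z' s := by rw [hnormSq s hs]; simp
    _ = z s * ((starRingEnd ℂ) (z s) * z' s) := by rw [Complex.normSq_eq_conj_mul_self]; ring
    _ = z s * ((g s : ℂ) * Complex.I) := by rw [h1]
    _ = (g s : ℂ) * Complex.I * z s := by ring
  set G : ℝ → ℝ := fun t => g (max (-M) (min M t)) with hGdef
  have hGc : Continuous G := by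
    apply hgc.comp_continuous
    · exact continuous_const.max (continuous_const.min continuous_id)
    · intro t
      exact ⟨le_max_left _ _, max_le (by linarith) (min_le_left _ _)⟩
  have hGg : ∀ t ∈ I, G t = g t := by
    intro t ht
    rw [hGdef]
    simp only
    rw [min_eq_right ht.2, max_eq_right ht.1]
  set θ : ℝ → ℝ := fun s => Complex.arg (z (-M)) + ∫ t in (-M)..s, G t with hθdef
  have hθd : ∀ s, HasDerivAt θ (G s) s := fun s =>
    ((hGc.integral_hasStrictDerivAt (-M) s).hasDerivAt).const_add _
  have hθc : Continuous θ := continuous_iff_continuousAt.2 fun s => (hθd s).continuousAt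
  set w : ℝ → ℂ := fun s => z s * Complex.exp (-(↑(θ s) * Complex.I)) with hwdef
  have hwc : ContinuousOn w I := hz.continuousOn.mul
    (Complex.continuous_exp.comp
      (((Complex.continuous_ofReal.comp hθc).mul continuous_const).neg)).continuousOn
  have hwconst : ∀ s ∈ I, w s = w (-M) := by
    apply constant_of_has_deriv_right_zero hwc
    intro x hx
    have hxI : x ∈ I := ⟨hx.1, le_of_lt hx.2⟩
    have hmem : I ∈ nhdsWithin x (Set.Ici x) := by
      rw [mem_nhdsWithin]
      exact ⟨Set.Iio M, isOpen_Iio, hx.2, fun t ht => ⟨le_trans hx.1 ht.2, le_of_lt ht.1⟩⟩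
    have hzx : HasDerivWithinAt z (z' x) (Set.Ici x) x := (hzdiff x hxI).mono_of_mem_nhdsWithin hmem
    have hθx : HasDerivAt (fun s => -(↑(θ s) * Complex.I)) (-(↑(g x) * Complex.I)) x := by
      have h1 : HasDerivAt θ (g x) x := by rw [← hGg x hxI]; exact hθd x
      exact (h1.ofReal_comp.mul_const Complex.I).neg
    have hex : HasDerivWithinAt (fun s => Complex.exp (-(↑(θ s) * Complex.I)))
        (Complex.exp (-(↑(θ x) * Complex.I)) * (-(↑(g x) * Complex.I))) (Set.Ici x) x :=
      hθx.hasDerivWithinAt.cexp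
    have hprod := hzx.mul hex
    have h0 : z' x * Complex.exp (-(↑(θ x) * Complex.I))
        + z x * (Complex.exp (-(↑(θ x) * Complex.I)) * (-(↑(g x) * Complex.I))) = 0 := by
      rw [hzeq x hxI]; ring
    rw [h0] at hprod
    exact hprod
  have hMI : (-M : ℝ) ∈ I := ⟨le_refl _, by linarith⟩
  have habs : ‖z (-M)‖ = 1 := by
    have h := hnormSq (-M) hMI
    have h2 := Complex.sq_norm (z (-M))
    nlinarith [norm_nonneg (z (-M))]
  have hwM : w (-M) = 1 := by
    have hzM : z (-M) = Complex.exp (↑(Complex.arg (z (-M))) * Complex.I) := by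
      conv_lhs => rw [← Complex.norm_mul_exp_arg_mul_I (z (-M))]
      rw [habs]
      simp
    have hθM : θ (-M) = Complex.arg (z (-M)) := by simp [hθdef]
    show z (-M) * Complex.exp (-(↑(θ (-M)) * Complex.I)) = 1
    rw [hθM]
    nth_rewrite 1 [hzM]
    rw [← Complex.exp_add, add_neg_cancel, Complex.exp_zero]
  have hfin : ∀ s ∈ I, z s = Complex.exp (↑(θ s) * Complex.I) := by
    intro s hs
    have h1 := hwconst s hs
    rw [hwM] at h1
    have h2 : z s = (Complex.exp (-(↑(θ s) * Complex.I)))⁻¹ := eq_inv_of_mul_eq_one_left ?_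
    · rw [← Complex.exp_neg] at h2
      simpa using h2
    · simpa [hwdef, mul_comm] using h1
  refine ⟨θ, hθc.continuousOn, fun s hs => ?_⟩
  have hzs := hfin s hs
  have hre' : (f s).1 = Real.cos (θ s) := by
    have := congrArg Complex.re hzs
    simpa [hzdef, Complex.exp_ofReal_mul_I_re] using this
  have him' : (f s).2 = Real.sin (θ s) := by
    have := congrArg Complex.im hzs
    simpa [hzdef, Complex.exp_ofReal_mul_I_im] using this
  exact Prod.ext hre' him'

/-- If a_± : [−M,M] → S¹ are smooth with disjoint images, then some
unit vector ω strictly separates them: ⟨a_+(ξ) − a_-(η), ω⟩ > 0 for all ξ, η. -/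
theorem separating_direction_for_disjoint_circle_arcs
    (M : ℝ) (hM : 0 < M) (aP aM : ℝ → ℝ × ℝ)
    (hPsmooth : ContDiffOn ℝ ∞ aP (Set.Icc (-M) M))
    (hMsmooth : ContDiffOn ℝ ∞ aM (Set.Icc (-M) M))
    (hPunit : ∀ s ∈ Set.Icc (-M) M, dot2 (aP s) (aP s) = 1)
    (hMunit : ∀ s ∈ Set.Icc (-M) M, dot2 (aM s) (aM s) = 1)
    (hne : ∀ ξ ∈ Set.Icc (-M) M, ∀ η ∈ Set.Icc (-M) M, aP ξ ≠ aM η) :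
    ∃ w : ℝ × ℝ, dot2 w w = 1 ∧
      ∀ ξ ∈ Set.Icc (-M) M, ∀ η ∈ Set.Icc (-M) M, 0 < dot2 (aP ξ - aM η) w := by
  set K : Set ℝ := Set.Icc (-M) M with hKdef
  have hKM : (-M : ℝ) ∈ K := ⟨le_refl _, by linarith⟩
  have hKc : IsCompact K := isCompact_Icc
  have hKne : K.Nonempty := ⟨-M, hKM⟩
  obtain ⟨α, hαc, hαe⟩ := circle_lift M hM aP hPsmooth hPunit
  obtain ⟨β, hβc, hβe⟩ := circle_lift M hM aM hMsmooth hMunit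
  have h2π : (0:ℝ) < 2 * π := by positivity
  have hne' : ∀ ξ ∈ K, ∀ η ∈ K, ∀ m : ℤ, α ξ - β η ≠ (m:ℝ) * (2 * π) := by
    intro ξ hξ η hη m hcontra
    apply hne ξ hξ η hη
    rw [hαe ξ hξ, hβe η hη]
    have hean : α ξ = β η + (m:ℝ) * (2 * π) := by linarith
    rw [hean, Real.cos_add_int_mul_two_pi, Real.sin_add_int_mul_two_pi]
  set Fd : ℝ × ℝ → ℝ := fun pr => α pr.1 - β pr.2 with hFddef
  have hFdc : ContinuousOn Fd (K ×ˢ K) :=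
    (hαc.comp continuous_fst.continuousOn (fun pr hpr => hpr.1)).sub
      (hβc.comp continuous_snd.continuousOn (fun pr hpr => hpr.2))
  have hconn : IsPreconnected (K ×ˢ K) := isPreconnected_Icc.prod isPreconnected_Icc
  have hoc : (Fd '' (K ×ˢ K)).OrdConnected := (hconn.image Fd hFdc).ordConnected
  set c : ℝ := α (-M) - β (-M) with hcdef
  have hcmem : c ∈ Fd '' (K ×ˢ K) := ⟨(-M, -M), ⟨hKM, hKM⟩, rfl⟩
  set k : ℤ := ⌊c / (2 * π)⌋ with hkdef
  have hck1 : (k : ℝ) * (2 * π) < c := by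
    have h1 : (k:ℝ) ≤ c / (2*π) := Int.floor_le _
    have h2 : (k:ℝ) ≠ c / (2*π) := by
      intro h
      exact hne' (-M) hKM (-M) hKM k (by field_simp at h; linarith)
    have h3 : (k:ℝ) < c / (2*π) := lt_of_le_of_ne h1 h2
    calc (k:ℝ) * (2*π) < (c / (2*π)) * (2*π) := by
          exact mul_lt_mul_of_pos_right h3 h2π
    _ = c := by field_simp
  have hck2 : c < ((k:ℝ)+1) * (2*π) := by
    have h1 : c / (2*π) < (k:ℝ) + 1 := Int.lt_floor_add_one _
    calc c = (c / (2*π)) * (2*π) := by field_simp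
    _ < ((k:ℝ)+1) * (2*π) := mul_lt_mul_of_pos_right h1 h2π
  have hbound : ∀ ξ ∈ K, ∀ η ∈ K,
      (k:ℝ)*(2*π) < α ξ - β η ∧ α ξ - β η < ((k:ℝ)+1)*(2*π) := by
    intro ξ hξ η hη
    have hmem : α ξ - β η ∈ Fd '' (K ×ˢ K) := ⟨(ξ, η), ⟨hξ, hη⟩, rfl⟩
    constructor
    · by_contra h
      push_neg at h
      have hk : (k:ℝ)*(2*π) ∈ Fd '' (K ×ˢ K) := hoc.out hmem hcmem ⟨h, le_of_lt hck1⟩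
      obtain ⟨pr, hpr, hFp⟩ := hk
      exact hne' pr.1 hpr.1 pr.2 hpr.2 k hFp
    · by_contra h
      push_neg at h
      have hk : ((k:ℝ)+1)*(2*π) ∈ Fd '' (K ×ˢ K) := hoc.out hcmem hmem ⟨le_of_lt hck2, h⟩
      obtain ⟨pr, hpr, hFp⟩ := hk
      refine hne' pr.1 hpr.1 pr.2 hpr.2 (k+1) ?_
      push_cast
      exact hFp
  obtain ⟨ξp, hξp, hp⟩ := (hKc.exists_isMinOn hKne hαc)
  obtain ⟨ξq, hξq, hq⟩ := (hKc.exists_isMaxOn hKne hαc)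
  obtain ⟨ηr, hηr, hr⟩ := (hKc.exists_isMinOn hKne hβc)
  obtain ⟨ηs, hηs, hs⟩ := (hKc.exists_isMaxOn hKne hβc)
  set p : ℝ := α ξp with hpdef
  set q : ℝ := α ξq with hqdef
  set r' : ℝ := β ηr + (k:ℝ)*(2*π) with hr'def
  set s' : ℝ := β ηs + (k:ℝ)*(2*π) with hs'def
  have hd : 0 < p - s' := by
    have := (hbound ξp hξp ηs hηs).1
    rw [hs'def, hpdef]; linarith
  have he : q - r' < 2*π := by
    have := (hbound ξq hξq ηr hηr).2
    rw [hr'def, hqdef]; push_cast at this; linarith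
  have hds : p - s' ≤ q - r' := by
    have h1 : p ≤ q := hp hξq
    have h2 : β ηr ≤ β ηs := hr hηs
    rw [hr'def, hs'def]; linarith
  set φ0 : ℝ := (p + q + r' + s')/4 with hφ0def
  refine ⟨(-Real.sin φ0, Real.cos φ0), ?_, ?_⟩
  · simp only [dot2]
    nlinarith [Real.sin_sq_add_cos_sq φ0]
  intro ξ hξ η hη
  set a : ℝ := α ξ with hadef
  set b : ℝ := β η + (k:ℝ)*(2*π) with hbdef
  have hcosb : Real.cos b = Real.cos (β η) := Real.cos_add_int_mul_two_pi _ _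
  have hsinb : Real.sin b = Real.sin (β η) := Real.sin_add_int_mul_two_pi _ _
  have key : dot2 (aP ξ - aM η) (-Real.sin φ0, Real.cos φ0)
      = 2 * Real.sin ((a-b)/2) * Real.cos ((a+b)/2 - φ0) := by
    rw [hαe ξ hξ, hβe η hη]
    simp only [dot2, Prod.fst_sub, Prod.snd_sub]
    rw [← hcosb, ← hsinb, Real.cos_sub_cos, Real.sin_sub_sin, Real.cos_sub]
    ring
  rw [key]
  have ha1 : p ≤ a := hp hξ
  have ha2 : a ≤ q := hq hξ
  have hb1 : r' ≤ b := by rw [hr'def, hbdef]; have h3 : β ηr ≤ β η := hr hη; linarith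
  have hb2 : b ≤ s' := by rw [hs'def, hbdef]; have h3 : β η ≤ β ηs := hs hη; linarith
  have hsinpos : 0 < Real.sin ((a-b)/2) := by
    apply Real.sin_pos_of_pos_of_lt_pi
    · linarith
    · linarith
  have hcospos : 0 < Real.cos ((a+b)/2 - φ0) := by
    apply Real.cos_pos_of_mem_Ioo
    constructor
    · simp only [hφ0def]; linarith
    · simp only [hφ0def]; linarith
  positivity
end
end

section
/- Let Ω ⊆ ℝ² be an open bounded set such that, for some (s₀,t₀) ∈ ℝ² and ε > 0, {s₀} × [t₀−ε, t₀) ⊆ Ω and (s₀,t₀) ∈ ∂Ω. Let φ: cl(Ω) → ℝ³ be a C¹ map of the form φ(s,t) = (t, γ(s,t)) with γ: cl(Ω) → ℝ², such that φ restricted to Ω is a C² timelike immersion, and such that ⟨γ_s(s₀,t), γ_t(s₀,t)⟩ = 0 and 0 < |γ_t(s₀,t)| < 1 for all t ∈ [t₀−ε, t₀), while |γ_t(s₀,t₀)| = 1. Define n(s₀,t) = γ_t(s₀,t)/|γ_t(s₀,t)|, the cross-sectional curvature k(s₀,t) = ⟨γ_ss(s₀,t), n(s₀,t)⟩ / |γ_s(s₀,t)|²,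 and the mean curvature scalar h(s₀,t) = −⟨γ_ss(s₀,t), n(s₀,t)⟩ / ( |γ_s(s₀,t)|² (1−|γ_t(s₀,t)|²)^{1/2} ) + ⟨γ_tt(s₀,t), n(s₀,t)⟩ / (1−|γ_t(s₀,t)|²)^{3/2}. If there is a constant C with |h(s₀,t)| ≤ C for all t ∈ [t₀−ε, t₀), then ∫_{t₀−ε}^{t₀} |k(s₀,t)| dt = ∞; in particular limsup_{t ↗ t₀} |k(s₀,t)| = ∞. -/
noncomputable section
open Real Set Filter MeasureTheory
open scoped ENNReal ContDiff

/-- γ_s. -/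
def gs (γ : ℝ × ℝ → ℝ × ℝ) (p : ℝ × ℝ) : ℝ × ℝ := fderiv ℝ γ p (1, 0)
/-- γ_t. -/
def gt (γ : ℝ × ℝ → ℝ × ℝ) (p : ℝ × ℝ) : ℝ × ℝ := fderiv ℝ γ p (0, 1)
/-- γ_ss. -/
def gss (γ : ℝ × ℝ → ℝ × ℝ) (p : ℝ × ℝ) : ℝ × ℝ :=
  fderiv ℝ (fun q => fderiv ℝ γ q (1, 0)) p (1, 0)
/-- γ_tt. -/
def gtt (γ : ℝ × ℝ → ℝ × ℝ) (p : ℝ × ℝ) : ℝ × ℝ :=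
  fderiv ℝ (fun q => fderiv ℝ γ q (0, 1)) p (0, 1)

/-- The unit vector n = γ_t/|γ_t|. -/
def nvec (γ : ℝ × ℝ → ℝ × ℝ) (p : ℝ × ℝ) : ℝ × ℝ :=
  (Real.sqrt (nsq (gt γ p)))⁻¹ • gt γ p

/-- Cross-sectional curvature k(s₀,t) = ⟨γ_ss, n⟩/|γ_s|². -/
def crossK (γ : ℝ × ℝ → ℝ × ℝ) (s₀ t : ℝ) : ℝ :=
  dot2 (gss γ (s₀, t)) (nvec γ (s₀, t)) / nsq (gs γ (s₀, t))

/-- Mean curvature scalar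
h = −⟨γ_ss,n⟩/(|γ_s|²(1−|γ_t|²)^{1/2}) + ⟨γ_tt,n⟩/(1−|γ_t|²)^{3/2}. -/
def hScal (γ : ℝ × ℝ → ℝ × ℝ) (s₀ t : ℝ) : ℝ :=
  -(dot2 (gss γ (s₀, t)) (nvec γ (s₀, t))) /
      (nsq (gs γ (s₀, t)) * Real.sqrt (1 - nsq (gt γ (s₀, t)))) +
    dot2 (gtt γ (s₀, t)) (nvec γ (s₀, t)) /
      (Real.sqrt (1 - nsq (gt γ (s₀, t)))) ^ 3

lemma dot2_smul_right (a b : ℝ × ℝ) (c : ℝ) : dot2 a (c • b) = c * dot2 a b := by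
  simp [dot2, Prod.smul_def, smul_eq_mul]; ring

lemma nsq_pos {a : ℝ × ℝ} (h : a ≠ 0) : 0 < nsq a := by
  have h' : a.1 ≠ 0 ∨ a.2 ≠ 0 := by
    by_contra hc
    push_neg at hc
    exact h (Prod.ext hc.1 hc.2)
  unfold nsq dot2
  rcases h' with h1 | h2
  · nlinarith [mul_self_pos.2 h1, mul_self_nonneg a.2]
  · nlinarith [mul_self_pos.2 h2, mul_self_nonneg a.1]

lemma alg_key (Dss Dtt A v h k : ℝ) (hA : A ≠ 0) (hv : v ≠ 0)
    (hk : k = Dss / A) (hh : h = -Dss / (A * v) + Dtt / v ^ 3) :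
    2 * Dtt / v ^ 2 = 2 * (v * h + k) := by
  subst hk hh; field_simp; ring

/-- If an orthogonally-parameterised timelike evolution with bounded
mean curvature degenerates (|γ_t(s₀,t₀)| = 1) at a boundary point, then the
cross-sectional curvature along s = s₀ has infinite time-integral, and in particular
blows up as t ↗ t₀. -/
theorem curvature_integral_blow_up
    (Ω : Set (ℝ × ℝ)) (hopen : IsOpen Ω) (hbdd : Bornology.IsBounded Ω)
    (s₀ t₀ ε : ℝ) (hε : 0 < ε)
    (hseg : {s₀} ×ˢ Set.Ico (t₀ - ε) t₀ ⊆ Ω)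
    (hfront : (s₀, t₀) ∈ frontier Ω)
    (γ : ℝ × ℝ → ℝ × ℝ)
    (hC1 : ContDiffOn ℝ 1 γ (closure Ω))
    (hC2 : ContDiffOn ℝ 2 γ Ω)
    (himm : ∀ p ∈ Ω, gs γ p ≠ 0)
    (htimelike : ∀ p ∈ Ω,
      nsq (gs γ p) * (nsq (gt γ p) - 1) - (dot2 (gs γ p) (gt γ p)) ^ 2 < 0)
    (horth : ∀ t ∈ Set.Ico (t₀ - ε) t₀, dot2 (gs γ (s₀, t)) (gt γ (s₀, t)) = 0)
    (hpos : ∀ t ∈ Set.Ico (t₀ - ε) t₀,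
      0 < nsq (gt γ (s₀, t)) ∧ nsq (gt γ (s₀, t)) < 1)
    (hnull : nsq (fderivWithin ℝ γ (closure Ω) (s₀, t₀) (0, 1)) = 1)
    (C : ℝ) (hbound : ∀ t ∈ Set.Ico (t₀ - ε) t₀, |hScal γ s₀ t| ≤ C) :
    (∫⁻ t in Set.Ico (t₀ - ε) t₀, ENNReal.ofReal |crossK γ s₀ t| = ⊤) ∧
    ∀ C' : ℝ, ∃ᶠ t in nhdsWithin t₀ (Set.Iio t₀), C' < |crossK γ s₀ t| := by
    classical
  have hmem : ∀ t ∈ Set.Ico (t₀ - ε) t₀, (s₀, t) ∈ Ω := fun t ht =>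
    hseg (Set.mk_mem_prod rfl ht)
  have ha0 : t₀ - ε ∈ Set.Ico (t₀ - ε) t₀ := ⟨le_refl _, by linarith⟩
  have hC0 : 0 ≤ C := le_trans (abs_nonneg _) (hbound _ ha0)
  set q : ℝ → ℝ := fun t => nsq (gt γ (s₀, t)) with hqdef
  set F : ℝ → ℝ := fun t => Real.log (1 + Real.sqrt (q t)) - Real.log (1 - Real.sqrt (q t))
    with hFdef
  set F' : ℝ → ℝ := fun t => 2 * dot2 (gtt γ (s₀, t)) (nvec γ (s₀, t)) / (1 - q t) with hF'def
  -- derivative of q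
  have hderivq : ∀ t ∈ Set.Ico (t₀ - ε) t₀,
      HasDerivAt q (2 * dot2 (gtt γ (s₀, t)) (gt γ (s₀, t))) t := by
    intro t ht
    have h2 : ContDiffAt ℝ 2 γ (s₀, t) := hC2.contDiffAt (hopen.mem_nhds (hmem t ht))
    have hcurve : HasDerivAt (fun τ : ℝ => ((s₀ : ℝ), τ)) (((0:ℝ), (1:ℝ))) t :=
      (hasDerivAt_const t s₀).prodMk (hasDerivAt_id t)
    have hf' : ContDiffAt ℝ 1 (fun x => fderiv ℝ γ x) (s₀, t) := h2.fderiv_right (by norm_num)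
    have hG : DifferentiableAt ℝ (fun x => fderiv ℝ γ x (0, 1)) (s₀, t) :=
      (hf'.differentiableAt one_ne_zero).clm_apply (differentiableAt_const _)
    have hgt' : HasDerivAt (fun τ => gt γ (s₀, τ)) (gtt γ (s₀, t)) t :=
      hG.hasFDerivAt.comp_hasDerivAt t hcurve
    have h1 : HasDerivAt (fun τ => (gt γ (s₀, τ)).1) ((gtt γ (s₀, t)).1) t :=
      (ContinuousLinearMap.fst ℝ ℝ ℝ).hasFDerivAt.comp_hasDerivAt t hgt'
    have h2' : HasDerivAt (fun τ => (gt γ (s₀, τ)).2) ((gtt γ (s₀, t)).2) t :=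
      (ContinuousLinearMap.snd ℝ ℝ ℝ).hasFDerivAt.comp_hasDerivAt t hgt'
    have := (h1.mul h1).add (h2'.mul h2')
    refine this.congr_deriv ?_
    simp [dot2]; ring
  -- derivative of F
  have hderivF : ∀ t ∈ Set.Ico (t₀ - ε) t₀, HasDerivAt F (F' t) t := by
    intro t ht
    obtain ⟨hq0'', hq1''⟩ := hpos t ht
    have hq0 : 0 < q t := hq0''
    have hq1 : q t < 1 := hq1''
    have hs0 : 0 < Real.sqrt (q t) := Real.sqrt_pos.2 hq0
    have hs1 : Real.sqrt (q t) < 1 := by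
      have := Real.sqrt_lt_sqrt hq0.le hq1
      rwa [Real.sqrt_one] at this
    have hsq : Real.sqrt (q t) ^ 2 = q t := Real.sq_sqrt hq0.le
    have hw : HasDerivAt (fun τ => Real.sqrt (q τ))
        (1 / (2 * Real.sqrt (q t)) * (2 * dot2 (gtt γ (s₀, t)) (gt γ (s₀, t)))) t :=
      (Real.hasDerivAt_sqrt hq0.ne').comp t (hderivq t ht)
    have hlog1 : HasDerivAt (fun τ => Real.log (1 + Real.sqrt (q τ)))
        ((1 + Real.sqrt (q t))⁻¹ *
          (1 / (2 * Real.sqrt (q t)) * (2 * dot2 (gtt γ (s₀, t)) (gt γ (s₀, t))))) t := by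
      have hinner : HasDerivAt (fun τ => 1 + Real.sqrt (q τ))
          (1 / (2 * Real.sqrt (q t)) * (2 * dot2 (gtt γ (s₀, t)) (gt γ (s₀, t)))) t := by
        exact hw.const_add 1
      exact (Real.hasDerivAt_log (by linarith)).comp t hinner
    have hlog2 : HasDerivAt (fun τ => Real.log (1 - Real.sqrt (q τ)))
        ((1 - Real.sqrt (q t))⁻¹ *
          (-(1 / (2 * Real.sqrt (q t)) * (2 * dot2 (gtt γ (s₀, t)) (gt γ (s₀, t)))))) t := by
      have hinner : HasDerivAt (fun τ => 1 - Real.sqrt (q τ))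
          (-(1 / (2 * Real.sqrt (q t)) * (2 * dot2 (gtt γ (s₀, t)) (gt γ (s₀, t))))) t := by
        exact hw.const_sub 1
      exact (Real.hasDerivAt_log (by linarith)).comp t hinner
    have := hlog1.sub hlog2
    refine this.congr_deriv ?_
    have hdot : dot2 (gtt γ (s₀, t)) (nvec γ (s₀, t)) =
        (Real.sqrt (q t))⁻¹ * dot2 (gtt γ (s₀, t)) (gt γ (s₀, t)) := by
      unfold nvec
      rw [dot2_smul_right]
    have hfac : 1 - q t = (1 - Real.sqrt (q t)) * (1 + Real.sqrt (q t)) := by nlinarith [hsq]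
    have hne1 : 1 - Real.sqrt (q t) ≠ 0 := by linarith
    have hne2 : 1 + Real.sqrt (q t) ≠ 0 := by linarith
    rw [hF'def]
    simp only
    rw [hdot, hfac]
    field_simp
    try ring
  -- F' ≤ 2C + 2|k|
  have hineq : ∀ t ∈ Set.Ico (t₀ - ε) t₀, F' t ≤ 2 * C + 2 * |crossK γ s₀ t| := by
    intro t ht
    obtain ⟨hq0'', hq1''⟩ := hpos t ht
    have hq0 : 0 < q t := hq0''
    have hq1 : q t < 1 := hq1''
    have hA : 0 < nsq (gs γ (s₀, t)) := nsq_pos (himm _ (hmem t ht))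
    have hv : 0 < Real.sqrt (1 - q t) := Real.sqrt_pos.2 (by linarith)
    have hv1 : Real.sqrt (1 - q t) ≤ 1 := Real.sqrt_le_one.2 (by linarith)
    have e1 : 2 * dot2 (gtt γ (s₀, t)) (nvec γ (s₀, t)) / (1 - q t) =
        2 * dot2 (gtt γ (s₀, t)) (nvec γ (s₀, t)) / (Real.sqrt (1 - q t)) ^ 2 := by
      rw [Real.sq_sqrt (by linarith : (0:ℝ) ≤ 1 - q t)]
    have hkey : 2 * dot2 (gtt γ (s₀, t)) (nvec γ (s₀, t)) / (1 - q t) =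
        2 * (Real.sqrt (1 - q t) * hScal γ s₀ t + crossK γ s₀ t) := by
      rw [e1]
      exact alg_key _ _ _ _ _ _ hA.ne' hv.ne' rfl rfl
    rw [hF'def]
    simp only
    rw [hkey]
    have h3 : Real.sqrt (1 - q t) * hScal γ s₀ t ≤ C := by
      calc Real.sqrt (1 - q t) * hScal γ s₀ t
          ≤ Real.sqrt (1 - q t) * |hScal γ s₀ t| :=
            mul_le_mul_of_nonneg_left (le_abs_self _) hv.le
        _ ≤ 1 * C := mul_le_mul hv1 (hbound t ht) (abs_nonneg _) zero_le_one
        _ = C := one_mul C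
    have h4 : crossK γ s₀ t ≤ |crossK γ s₀ t| := le_abs_self _
    linarith
  -- Step C : the limit of gt along the segment equals the boundary derivative, with nsq = 1
  have hx₀ : ((s₀ : ℝ), t₀) ∈ closure Ω := frontier_subset_closure hfront
  have hins : insert ((s₀ : ℝ), t₀) (closure Ω) = closure Ω := Set.insert_eq_self.2 hx₀
  have hC1x : ContDiffWithinAt ℝ ((0 : ℕ) + 1) γ (closure Ω) (s₀, t₀) := by
    have := hC1 _ hx₀
    norm_num at this ⊢
    exact this
  obtain ⟨u, hu, -, f', huf', hf'c⟩ :=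
    (contDiffWithinAt_succ_iff_hasFDerivWithinAt (by simp)).1 hC1x
  rw [hins] at hu
  obtain ⟨w, hwopen, hxw, hwu⟩ := mem_nhdsWithin.1 hu
  obtain ⟨r, hr, hball⟩ := Metric.isOpen_iff.1 hwopen _ hxw
  set δ : ℝ := min ε (r / 2) with hδdef
  have hδ : 0 < δ := lt_min hε (by linarith)
  have hδε : δ ≤ ε := min_le_left _ _
  have hδr : δ < r := lt_of_le_of_lt (min_le_right _ _) (by linarith)
  have hmemw : ∀ t ∈ Set.Icc (t₀ - δ) t₀, ((s₀ : ℝ), t) ∈ w := by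
    intro t ht
    apply hball
    rw [Metric.mem_ball, Prod.dist_eq]
    have h1 : dist t t₀ < r := by
      rw [Real.dist_eq, abs_sub_lt_iff]
      constructor <;> [linarith [ht.2]; linarith [ht.1]]
    simp only [dist_self]
    exact max_lt (by linarith) h1
  have hmemcl : ∀ t ∈ Set.Icc (t₀ - δ) t₀, ((s₀ : ℝ), t) ∈ closure Ω := by
    intro t ht
    rcases eq_or_lt_of_le ht.2 with h | h
    · rw [h]; exact hx₀
    · exact subset_closure (hseg (Set.mk_mem_prod rfl ⟨by linarith [ht.1], h⟩))
  have hsegu : ∀ t ∈ Set.Icc (t₀ - δ) t₀, ((s₀ : ℝ), t) ∈ u := fun t ht =>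
    hwu ⟨hmemw t ht, hmemcl t ht⟩
  -- identification at interior points
  have hgt_eq : ∀ t ∈ Set.Ico (t₀ - δ) t₀, gt γ (s₀, t) = f' (s₀, t) ((0 : ℝ), (1 : ℝ)) := by
    intro t ht
    have hΩ : ((s₀ : ℝ), t) ∈ Ω := hseg (Set.mk_mem_prod rfl ⟨by linarith [ht.1], ht.2⟩)
    have hu' : ((s₀ : ℝ), t) ∈ u := hsegu t ⟨ht.1, ht.2.le⟩
    have h1 : HasFDerivWithinAt γ (f' (s₀, t)) (w ∩ Ω) (s₀, t) :=
      (huf' _ hu').mono fun z hz => hwu ⟨hz.1, subset_closure hz.2⟩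
    have h2 : HasFDerivAt γ (f' (s₀, t)) (s₀, t) :=
      h1.hasFDerivAt (Filter.inter_mem (hwopen.mem_nhds (hmemw t ⟨ht.1, ht.2.le⟩))
        (hopen.mem_nhds hΩ))
    show fderiv ℝ γ (s₀, t) ((0 : ℝ), (1 : ℝ)) = _
    rw [h2.fderiv]
  -- identification of the boundary value
  have hval : nsq (f' (s₀, t₀) ((0 : ℝ), (1 : ℝ))) = 1 := by
    have hdiffW : HasFDerivWithinAt γ (fderivWithin ℝ γ (closure Ω) (s₀, t₀)) (closure Ω)
        (s₀, t₀) := ((hC1 _ hx₀).differentiableWithinAt one_ne_zero).hasFDerivWithinAt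
    set S : Set (ℝ × ℝ) := {s₀} ×ˢ Set.Icc (t₀ - δ) t₀ with hS
    have hSu : S ⊆ u := by
      rintro ⟨z1, z2⟩ ⟨hz1, hz2⟩
      obtain rfl : z1 = s₀ := hz1
      exact hsegu z2 hz2
    have hScl : S ⊆ closure Ω := by
      rintro ⟨z1, z2⟩ ⟨hz1, hz2⟩
      obtain rfl : z1 = s₀ := hz1
      exact hmemcl z2 hz2
    have hA : HasFDerivWithinAt γ (f' (s₀, t₀)) S (s₀, t₀) :=
      (huf' _ (hsegu t₀ ⟨by linarith, le_rfl⟩)).mono hSu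
    have hB : HasFDerivWithinAt γ (fderivWithin ℝ γ (closure Ω) (s₀, t₀)) S (s₀, t₀) :=
      hdiffW.mono hScl
    have htc : ((0 : ℝ), -δ) ∈ tangentConeAt ℝ S (s₀, t₀) := by
      have he : ((s₀ : ℝ), t₀ - δ) - ((s₀ : ℝ), t₀) = ((0 : ℝ), -δ) := by
        simp [Prod.ext_iff]
      rw [← he]
      apply mem_tangentConeAt_of_openSegment_subset
      intro z hz
      rw [openSegment_eq_image] at hz
      obtain ⟨θ, hθ, rfl⟩ := hz
      beta_reduce
      have hz' : (1 - θ) • ((s₀ : ℝ), t₀) + θ • ((s₀ : ℝ), t₀ - δ)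
          = ((s₀ : ℝ), t₀ - θ * δ) := by
        simp only [Prod.smul_mk, smul_eq_mul, Prod.mk_add_mk, Prod.mk.injEq]
        constructor <;> ring
      rw [hz']
      exact Set.mk_mem_prod rfl
        ⟨by nlinarith [hθ.1, hθ.2], by nlinarith [hθ.1, hθ.2]⟩
    have heq : f' (s₀, t₀) ((0 : ℝ), -δ) = fderivWithin ℝ γ (closure Ω) (s₀, t₀) ((0 : ℝ), -δ) :=
      hA.unique_on hB htc
    have heq1 : f' (s₀, t₀) ((0 : ℝ), (1 : ℝ)) =
        fderivWithin ℝ γ (closure Ω) (s₀, t₀) ((0 : ℝ), (1 : ℝ)) := by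
      have h1 : ((0 : ℝ), -δ) = (-δ) • ((0 : ℝ), (1 : ℝ)) := by
        simp [Prod.ext_iff]
      rw [h1, _root_.map_smul, _root_.map_smul] at heq
      exact smul_right_injective (ℝ × ℝ) (neg_ne_zero.2 hδ.ne') heq
    rw [heq1]
    exact hnull
  -- limit of gt along the segment, hence limit of q
  have hcurveT : Tendsto (fun t : ℝ => ((s₀ : ℝ), t)) (nhdsWithin t₀ (Set.Iio t₀))
      (nhdsWithin ((s₀ : ℝ), t₀) u) := by
    rw [tendsto_nhdsWithin_iff]
    constructor
    · exact ((continuous_const.prodMk continuous_id).tendsto t₀).mono_left nhdsWithin_le_nhds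
    · filter_upwards [Ioo_mem_nhdsLT (by linarith : t₀ - δ < t₀)] with t ht
      exact hsegu t ⟨ht.1.le, ht.2.le⟩
  have hlimgt : Tendsto (fun t => gt γ (s₀, t)) (nhdsWithin t₀ (Set.Iio t₀))
      (nhds (f' (s₀, t₀) ((0 : ℝ), (1 : ℝ)))) := by
    have hcw : ContinuousWithinAt f' u (s₀, t₀) := hf'c.continuousWithinAt
    have h0 : Tendsto (fun t : ℝ => f' ((s₀ : ℝ), t) ((0 : ℝ), (1 : ℝ)))
        (nhdsWithin t₀ (Set.Iio t₀)) (nhds (f' (s₀, t₀) ((0 : ℝ), (1 : ℝ)))) := by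
      have hev : Continuous fun L : ℝ × ℝ →L[ℝ] ℝ × ℝ => L ((0 : ℝ), (1 : ℝ)) :=
        continuous_id.clm_apply continuous_const
      exact (hev.tendsto _).comp (hcw.tendsto.comp hcurveT)
    refine h0.congr' ?_
    filter_upwards [Ioo_mem_nhdsLT (by linarith : t₀ - δ < t₀)] with t ht
    exact (hgt_eq t ⟨ht.1.le, ht.2⟩).symm
  have hqlim : Tendsto q (nhdsWithin t₀ (Set.Iio t₀)) (nhds 1) := by
    have hnsqc : Continuous nsq := by
      unfold nsq dot2
      fun_prop
    have := (hnsqc.tendsto _).comp hlimgt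
    rwa [Function.comp_def, hval] at this
  -- F tends to infinity
  have hFtop : Tendsto F (nhdsWithin t₀ (Set.Iio t₀)) atTop := by
    have hwlim : Tendsto (fun t => Real.sqrt (q t)) (nhdsWithin t₀ (Set.Iio t₀)) (nhds 1) := by
      have := (Real.continuous_sqrt.tendsto (1 : ℝ)).comp hqlim
      rwa [Function.comp_def, Real.sqrt_one] at this
    have hterm2 : Tendsto (fun t => -Real.log (1 - Real.sqrt (q t)))
        (nhdsWithin t₀ (Set.Iio t₀)) atTop := by
      have h1 : Tendsto (fun t => 1 - Real.sqrt (q t)) (nhdsWithin t₀ (Set.Iio t₀))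
          (nhdsWithin 0 (Set.Ioi 0)) := by
        rw [tendsto_nhdsWithin_iff]
        constructor
        · have := (tendsto_const_nhds (x := (1:ℝ))).sub hwlim
          simpa using this
        · filter_upwards [Ioo_mem_nhdsLT (by linarith : t₀ - ε < t₀)] with t ht
          obtain ⟨h0', h1'⟩ := hpos t ⟨ht.1.le, ht.2⟩
          have hq0 : 0 ≤ q t := le_of_lt h0'
          have hq1 : q t < 1 := h1'
          have : Real.sqrt (q t) < 1 := by
            have := Real.sqrt_lt_sqrt hq0 hq1
            rwa [Real.sqrt_one] at this
          simp only [Set.mem_Ioi]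
          linarith
      have := Real.tendsto_log_nhdsGT_zero.comp h1
      exact tendsto_neg_atBot_atTop.comp this
    have hterm1 : ∀ t, (0 : ℝ) ≤ Real.log (1 + Real.sqrt (q t)) := by
      intro t
      apply Real.log_nonneg
      have := Real.sqrt_nonneg (q t)
      linarith
    have : Tendsto (fun t => Real.log (1 + Real.sqrt (q t)) +
        -Real.log (1 - Real.sqrt (q t))) (nhdsWithin t₀ (Set.Iio t₀)) atTop :=
      tendsto_atTop_add_left_of_le _ 0 hterm1 hterm2
    refine this.congr fun t => ?_
    rw [hFdef]
    simp only [sub_eq_add_neg]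
  -- measurability of crossK
  have hmeasK : Measurable fun t => crossK γ s₀ t := by
    have hc : Measurable fun t : ℝ => ((s₀ : ℝ), t) :=
      (continuous_const.prodMk continuous_id).measurable
    have m_gs : Measurable fun t : ℝ => gs γ (s₀, t) :=
      (measurable_fderiv_apply_const ℝ γ _).comp hc
    have m_gt : Measurable fun t : ℝ => gt γ (s₀, t) :=
      (measurable_fderiv_apply_const ℝ γ _).comp hc
    have m_gss : Measurable fun t : ℝ => gss γ (s₀, t) :=
      (measurable_fderiv_apply_const ℝ (fun q => fderiv ℝ γ q (1, 0)) _).comp hc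
    have m_nvec : Measurable fun t : ℝ => nvec γ (s₀, t) := by
      unfold nvec
      refine Measurable.smul (f := fun t => (√(nsq (gt γ (s₀, t))))⁻¹) (g := fun t => gt γ (s₀, t)) ?_ ?_
      · exact (Real.continuous_sqrt.measurable.comp
          ((m_gt.fst.mul m_gt.fst).add (m_gt.snd.mul m_gt.snd))).inv
      · exact m_gt
    unfold crossK dot2 nsq
    apply Measurable.div
    · exact (m_gss.fst.mul m_nvec.fst).add (m_gss.snd.mul m_nvec.snd)
    · exact (m_gs.fst.mul m_gs.fst).add (m_gs.snd.mul m_gs.snd)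
  -- the key non-integrability lemma
  have key : ∀ a' ∈ Set.Ico (t₀ - ε) t₀,
      ¬ MeasureTheory.IntegrableOn (fun t => |crossK γ s₀ t|) (Set.Ico a' t₀) := by
    intro a' ha' hInt
    set φ : ℝ → ℝ := fun t => 2 * C + 2 * |crossK γ s₀ t| with hφdef
    have hφint : MeasureTheory.IntegrableOn φ (Set.Ico a' t₀) := by
      apply MeasureTheory.Integrable.add
      · exact integrableOn_const (C := 2 * C) measure_Ico_lt_top.ne
      · exact hInt.const_mul 2
    have hφnn : ∀ t, 0 ≤ φ t := fun t => by
      have := abs_nonneg (crossK γ s₀ t); rw [hφdef]; simp only; linarith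
    set M : ℝ := ∫ t in Set.Ico a' t₀, φ t with hM
    have hFb : ∀ b ∈ Set.Ico a' t₀, F b ≤ F a' + M := by
      intro b hb
      have hab : a' ≤ b := hb.1
      have hIccI : Set.Icc a' b ⊆ Set.Ico (t₀ - ε) t₀ := fun x hx =>
        ⟨le_trans ha'.1 hx.1, lt_of_le_of_lt hx.2 hb.2⟩
      have hcont : ContinuousOn F (Set.Icc a' b) := fun x hx =>
        (hderivF x (hIccI hx)).continuousAt.continuousWithinAt
      have hderiv : ∀ x ∈ Set.Ioo a' b, HasDerivWithinAt F (F' x) (Set.Ioi x) x := fun x hx =>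
        (hderivF x (hIccI ⟨hx.1.le, hx.2.le⟩)).hasDerivWithinAt
      have hφint' : MeasureTheory.IntegrableOn φ (Set.Icc a' b) :=
        hφint.mono_set (fun x hx => ⟨hx.1, lt_of_le_of_lt hx.2 hb.2⟩)
      have hle : ∀ x ∈ Set.Ioo a' b, F' x ≤ φ x := fun x hx =>
        hineq x (hIccI ⟨hx.1.le, hx.2.le⟩)
      have h1 : F b - F a' ≤ ∫ y in a'..b, φ y :=
        intervalIntegral.sub_le_integral_of_hasDeriv_right_of_le hab hcont hderiv hφint' hle
      have h2 : ∫ y in a'..b, φ y ≤ M := by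
        rw [intervalIntegral.integral_of_le hab, hM]
        apply MeasureTheory.setIntegral_mono_set hφint
        · exact Filter.Eventually.of_forall fun x => hφnn x
        · exact HasSubset.Subset.eventuallyLE fun x hx => ⟨le_of_lt hx.1, lt_of_le_of_lt hx.2 hb.2⟩
      linarith
    have h1 : ∀ᶠ b in nhdsWithin t₀ (Set.Iio t₀), F a' + M < F b :=
      hFtop.eventually_gt_atTop _
    have h2 : Set.Ioo a' t₀ ∈ nhdsWithin t₀ (Set.Iio t₀) :=
      Ioo_mem_nhdsLT ha'.2
    obtain ⟨b, hb1, hb2⟩ := (h1.and (Filter.eventually_of_mem h2 fun x hx => hx)).exists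
    have := hFb b ⟨hb2.1.le, hb2.2⟩
    linarith
  constructor
  · by_contra hne
    apply key (t₀ - ε) ha0
    refine ⟨hmeasK.abs.aestronglyMeasurable, ?_⟩
    rw [MeasureTheory.hasFiniteIntegral_iff_norm]
    have hlt : (∫⁻ t in Set.Ico (t₀ - ε) t₀, ENNReal.ofReal |crossK γ s₀ t|) < ⊤ :=
      lt_top_iff_ne_top.2 hne
    simpa only [Real.norm_eq_abs, abs_abs] using hlt
  · intro C'
    by_contra hfreq
    rw [Filter.not_frequently] at hfreq
    have hfreq' : ∀ᶠ t in nhdsWithin t₀ (Set.Iio t₀), |crossK γ s₀ t| ≤ C' := by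
      filter_upwards [hfreq] with t ht
      exact not_lt.1 ht
    obtain ⟨l, hl, hIoo⟩ := mem_nhdsLT_iff_exists_Ioo_subset.1 hfreq'
    set a' : ℝ := max (t₀ - ε) ((l + t₀) / 2) with ha'def
    have hla : l < a' := lt_of_lt_of_le (by rw [Set.mem_Iio] at hl; linarith)
      (le_max_right _ _)
    have ha'mem : a' ∈ Set.Ico (t₀ - ε) t₀ := by
      constructor
      · exact le_max_left _ _
      · rw [Set.mem_Iio] at hl
        apply max_lt (by linarith) (by linarith)
    apply key a' ha'mem
    apply MeasureTheory.Measure.integrableOn_of_bounded (M := C') measure_Ico_lt_top.ne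
      hmeasK.abs.aestronglyMeasurable
    apply MeasureTheory.ae_restrict_of_forall_mem measurableSet_Ico
    intro t ht
    have : t ∈ Set.Ioo l t₀ := ⟨lt_of_lt_of_le hla ht.1, ht.2⟩
    have := hIoo this
    rw [Real.norm_eq_abs, abs_abs]
    exact this
end
end

section
/- Let γ: ℝ² → ℝ² be the evolution by isothermal gauge of C¹ × C⁰ initial data (c,v), and suppose c is proper, i.e. |c(s)| → ∞ as s → ±∞. Then for every t ∈ ℝ, |γ(s,t)| → ∞ as s → ±∞; hence each map γ(·,t): ℝ → ℝ² is proper, and φ(s,t) = (t, γ(s,t)) is a proper map ℝ² → ℝ³. -/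
noncomputable section
open Real Set Filter MeasureTheory
open scoped ContDiff ENNReal

/-- Euclidean norm on ℝ². -/
def enorm2 (a : ℝ × ℝ) : ℝ := Real.sqrt (nsq a)

/-- d'Alembert's formula: the evolution by isothermal gauge of initial data (c,v),
γ(s,t) = (1/2)(c(s+t) + c(s−t) + ∫_{s−t}^{s+t} v). -/
def gammaIG (c v : ℝ → ℝ × ℝ) (p : ℝ × ℝ) : ℝ × ℝ :=
  (1 / 2 : ℝ) • (c (p.1 + p.2) + c (p.1 - p.2) + ∫ ζ in (p.1 - p.2)..(p.1 + p.2), v ζ)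

/-- Partial derivative in s of a map ℝ² → ℝ². -/
def pds (γ : ℝ × ℝ → ℝ × ℝ) (p : ℝ × ℝ) : ℝ × ℝ := deriv (fun x => γ (x, p.2)) p.1
/-- Partial derivative in t of a map ℝ² → ℝ². -/
def pdt (γ : ℝ × ℝ → ℝ × ℝ) (p : ℝ × ℝ) : ℝ × ℝ := deriv (fun y => γ (p.1, y)) p.2

/-- Spatial direction a₊ = v + ċ of the outgoing null tangent. -/
def aplus (c v : ℝ → ℝ × ℝ) (s : ℝ) : ℝ × ℝ := v s + deriv c s
/-- Spatial direction a₋ = v − ċ of the incoming null tangent. -/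
def aminus (c v : ℝ → ℝ × ℝ) (s : ℝ) : ℝ × ℝ := v s - deriv c s

/-- The characteristic diamond D(s₁,s₂) = {(s,t) : s₁ + |t| ≤ s ≤ s₂ − |t|}. -/
def diamond (s₁ s₂ : ℝ) : Set (ℝ × ℝ) :=
  {p : ℝ × ℝ | s₁ + |p.2| ≤ p.1 ∧ p.1 ≤ s₂ - |p.2|}

/-- Admissible C¹ × C⁰ initial data for the isothermal gauge:
⟨ċ,v⟩ = 0, |ċ|² + |v|² = 1 and |v| < 1. -/
structure IGData (c v : ℝ → ℝ × ℝ) : Prop where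
  hc : ContDiff ℝ 1 c
  hv : Continuous v
  horth : ∀ s, dot2 (deriv c s) (v s) = 0
  hnorm : ∀ s, nsq (deriv c s) + nsq (v s) = 1
  hvlt : ∀ s, nsq (v s) < 1

/-- ϑ is a continuous lift of the unit tangent U₀ = ċ/|ċ| along c. -/
def IsTangentLift (c : ℝ → ℝ × ℝ) (ϑ : ℝ → ℝ) : Prop :=
  Continuous ϑ ∧
    ∀ s, (enorm2 (deriv c s))⁻¹ • deriv c s = ((Real.cos (ϑ s), Real.sin (ϑ s)) : ℝ × ℝ)


/-! ### Auxiliary lemmas -/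

lemma enorm2_eq' (a : ℝ × ℝ) : enorm2 a = ‖((a.1 : ℂ) + (a.2 : ℂ) * Complex.I)‖ := by
  rw [Complex.norm_def, Complex.normSq_add_mul_I, enorm2, nsq, dot2]
  ring_nf

lemma enorm2_sub_le' (x y : ℝ × ℝ) : enorm2 x - enorm2 y ≤ enorm2 (x - y) := by
  simp only [enorm2_eq', Prod.fst_sub, Prod.snd_sub, Complex.ofReal_sub]
  have heq : ((x.1 : ℂ) - (y.1 : ℂ) + ((x.2 : ℂ) - (y.2 : ℂ)) * Complex.I)
      = ((x.1 : ℂ) + (x.2 : ℂ) * Complex.I) - ((y.1 : ℂ) + (y.2 : ℂ) * Complex.I) := by ring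
  rw [heq]
  exact norm_sub_norm_le _ _

lemma enorm2_le_two_norm' (a : ℝ × ℝ) : enorm2 a ≤ 2 * ‖a‖ := by
  have h1 : |a.1| ≤ ‖a‖ := by simpa using norm_fst_le a
  have h2 : |a.2| ≤ ‖a‖ := by simpa using norm_snd_le a
  have h0 : (0:ℝ) ≤ ‖a‖ := norm_nonneg a
  have : nsq a ≤ (2 * ‖a‖) ^ 2 := by
    simp only [nsq, dot2]
    nlinarith [abs_nonneg a.1, abs_nonneg a.2, sq_abs a.1, sq_abs a.2]
  calc enorm2 a ≤ Real.sqrt ((2 * ‖a‖) ^ 2) := Real.sqrt_le_sqrt this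
    _ = 2 * ‖a‖ := Real.sqrt_sq (by linarith)

lemma norm_le_one_of_nsq' (a : ℝ × ℝ) (h : nsq a ≤ 1) : ‖a‖ ≤ 1 := by
  simp only [nsq, dot2] at h
  rw [Prod.norm_def, Real.norm_eq_abs, Real.norm_eq_abs]
  refine max_le (abs_le.2 ⟨by nlinarith, by nlinarith⟩) (abs_le.2 ⟨by nlinarith, by nlinarith⟩)

lemma gamma_dist' (c v : ℝ → ℝ × ℝ) (hdata : IGData c v) (s t : ℝ) :
    ‖gammaIG c v (s, t) - c s‖ ≤ 2 * |t| := by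
  have hlip : LipschitzWith 1 c := by
    refine lipschitzWith_of_nnnorm_deriv_le (hdata.hc.differentiable one_ne_zero) fun x => ?_
    have h : ‖deriv c x‖ ≤ 1 := norm_le_one_of_nsq' _ (by
      nlinarith [hdata.hnorm x,
        (by simp [nsq, dot2]; nlinarith [sq_nonneg (v x).1, sq_nonneg (v x).2] :
          (0:ℝ) ≤ nsq (v x))])
    exact_mod_cast h
  have key : ∀ a : ℝ, ‖c a - c s‖ ≤ |a - s| := fun a => by
    have := hlip.dist_le_mul a s
    simpa [dist_eq_norm, Real.dist_eq] using this
  have h1 : ‖c (s + t) - c s‖ ≤ |t| := by simpa using key (s + t)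
  have h2 : ‖c (s - t) - c s‖ ≤ |t| := by
    have := key (s - t); rw [show s - t - s = -t by ring, abs_neg] at this; exact this
  have hI : ‖∫ ζ in (s - t)..(s + t), v ζ‖ ≤ 2 * |t| := by
    have := intervalIntegral.norm_integral_le_of_norm_le_const (a := s - t) (b := s + t)
      (C := 1) (f := v) (fun x _ => norm_le_one_of_nsq' _ (le_of_lt (hdata.hvlt x)))
    calc ‖∫ ζ in (s - t)..(s + t), v ζ‖ ≤ 1 * |s + t - (s - t)| := this
      _ = 2 * |t| := by rw [show s + t - (s - t) = 2 * t by ring, abs_mul]; simp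
  have heq : gammaIG c v (s, t) - c s
      = (1/2 : ℝ) • ((c (s + t) - c s) + (c (s - t) - c s)
          + ∫ ζ in (s - t)..(s + t), v ζ) := by
    simp only [gammaIG]
    module
  rw [heq, norm_smul]
  have hs4 : ‖(c (s + t) - c s) + (c (s - t) - c s) + ∫ ζ in (s - t)..(s + t), v ζ‖
      ≤ 4 * |t| :=
    le_trans (norm_add_le _ _) (by
      linarith [le_trans (norm_add_le (c (s+t) - c s) (c (s-t) - c s)) (add_le_add h1 h2)])
  calc ‖(1/2:ℝ)‖ * ‖(c (s + t) - c s) + (c (s - t) - c s) + ∫ ζ in (s - t)..(s + t), v ζ‖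
      ≤ (1/2) * (4 * |t|) := by
        rw [show ‖(1/2:ℝ)‖ = 1/2 by simp [abs_of_nonneg]]
        exact mul_le_mul_of_nonneg_left hs4 (by norm_num)
    _ = 2 * |t| := by ring

lemma gamma_cont' (c v : ℝ → ℝ × ℝ) (hdata : IGData c v) : Continuous (gammaIG c v) := by
  have hint : ∀ a b : ℝ, IntervalIntegrable v MeasureTheory.volume a b := fun a b =>
    hdata.hv.intervalIntegrable a b
  have hF : Continuous (fun b => ∫ ζ in (0:ℝ)..b, v ζ) :=
    intervalIntegral.continuous_primitive hint 0
  have heq : ∀ p : ℝ × ℝ, gammaIG c v p = (1/2 : ℝ) • (c (p.1 + p.2) + c (p.1 - p.2)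
      + ((∫ ζ in (0:ℝ)..(p.1 + p.2), v ζ) - ∫ ζ in (0:ℝ)..(p.1 - p.2), v ζ)) := fun p => by
    rw [gammaIG,
      intervalIntegral.integral_interval_sub_left (hint 0 (p.1 + p.2)) (hint 0 (p.1 - p.2))]
  rw [show gammaIG c v = fun p : ℝ × ℝ => (1/2 : ℝ) • (c (p.1 + p.2) + c (p.1 - p.2)
      + ((∫ ζ in (0:ℝ)..(p.1 + p.2), v ζ) - ∫ ζ in (0:ℝ)..(p.1 - p.2), v ζ)) from funext heq]
  have hadd : Continuous (fun p : ℝ × ℝ => p.1 + p.2) := continuous_fst.add continuous_snd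
  have hsub : Continuous (fun p : ℝ × ℝ => p.1 - p.2) := continuous_fst.sub continuous_snd
  exact (((hdata.hc.continuous.comp hadd).add (hdata.hc.continuous.comp hsub)).add
    ((hF.comp hadd).sub (hF.comp hsub))).const_smul (1/2 : ℝ)

/-- If the initial curve c is proper, then every cross-section
γ(·,t) of the evolution by isothermal gauge is proper, and φ(s,t) = (t,γ(s,t))
is a proper map. -/
theorem isothermal_evolution_is_proper
    (c v : ℝ → ℝ × ℝ) (hdata : IGData c v)
    (hcproper : Tendsto (fun s => enorm2 (c s)) atTop atTop ∧
      Tendsto (fun s => enorm2 (c s)) atBot atTop) :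
    (∀ t : ℝ, Tendsto (fun s => enorm2 (gammaIG c v (s, t))) atTop atTop ∧
      Tendsto (fun s => enorm2 (gammaIG c v (s, t))) atBot atTop) ∧
    (∀ t : ℝ, IsProperMap (fun s => gammaIG c v (s, t))) ∧
    IsProperMap (fun p : ℝ × ℝ => ((p.2, gammaIG c v p) : ℝ × ℝ × ℝ)) := by
  obtain ⟨htop, hbot⟩ := hcproper
  have hkey : ∀ s t : ℝ, enorm2 (c s) - 4 * |t| ≤ enorm2 (gammaIG c v (s, t)) := by
    intro s t
    have h1 := enorm2_sub_le' (c s) (gammaIG c v (s, t))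
    have h2 : enorm2 (c s - gammaIG c v (s, t)) ≤ 4 * |t| := by
      calc enorm2 (c s - gammaIG c v (s, t)) ≤ 2 * ‖c s - gammaIG c v (s, t)‖ :=
            enorm2_le_two_norm' _
        _ = 2 * ‖gammaIG c v (s, t) - c s‖ := by rw [norm_sub_rev]
        _ ≤ 2 * (2 * |t|) := by linarith [gamma_dist' c v hdata s t]
        _ = 4 * |t| := by ring
    linarith
  have hbdd : ∀ B : ℝ, ∃ M : ℝ, ∀ s : ℝ, enorm2 (c s) ≤ B → |s| ≤ M := by
    intro B
    obtain ⟨M₁, hM₁⟩ := eventually_atTop.1 (htop.eventually_gt_atTop B)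
    obtain ⟨M₂, hM₂⟩ := eventually_atBot.1 (hbot.eventually_gt_atTop B)
    refine ⟨max |M₁| |M₂|, fun s hs => ?_⟩
    have h1 : s < M₁ := by
      by_contra h; push_neg at h; exact absurd hs (not_le.2 (hM₁ s h))
    have h2 : M₂ < s := by
      by_contra h; push_neg at h; exact absurd hs (not_le.2 (hM₂ s h))
    refine abs_le.2 ⟨?_, ?_⟩
    · have : -(max |M₁| |M₂|) ≤ -|M₂| := neg_le_neg (le_max_right _ _)
      have h3 : -|M₂| ≤ M₂ := neg_abs_le M₂
      linarith
    · have : |M₁| ≤ max |M₁| |M₂| := le_max_left _ _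
      have h3 : M₁ ≤ |M₁| := le_abs_self M₁
      linarith
  have hcont := gamma_cont' c v hdata
  refine ⟨?_, ?_, ?_⟩
  · intro t
    constructor
    · refine tendsto_atTop_mono (fun s => ?_)
        (tendsto_atTop_add_const_right atTop (-(4 * |t|)) htop)
      simpa [sub_eq_add_neg] using hkey s t
    · refine tendsto_atTop_mono (fun s => ?_)
        (tendsto_atTop_add_const_right atBot (-(4 * |t|)) hbot)
      simpa [sub_eq_add_neg] using hkey s t
  · intro t
    rw [isProperMap_iff_isCompact_preimage]
    have hcont1 : Continuous (fun s : ℝ => gammaIG c v (s, t)) :=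
      hcont.comp (Continuous.prodMk continuous_id continuous_const)
    refine ⟨hcont1, fun K hK => ?_⟩
    obtain ⟨R, hR⟩ := hK.isBounded.exists_norm_le
    obtain ⟨M, hM⟩ := hbdd (2 * R + 4 * |t|)
    refine (isCompact_Icc (a := -M) (b := M)).of_isClosed_subset
      (hK.isClosed.preimage hcont1) ?_
    intro s hs
    simp only [Set.mem_preimage] at hs
    have h1 : ‖gammaIG c v (s, t)‖ ≤ R := hR _ hs
    have h2 : enorm2 (gammaIG c v (s, t)) ≤ 2 * R :=
      le_trans (enorm2_le_two_norm' _) (by linarith)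
    have h3 : enorm2 (c s) ≤ 2 * R + 4 * |t| := by linarith [hkey s t]
    exact Set.mem_Icc.2 (abs_le.1 (hM s h3))
  · rw [isProperMap_iff_isCompact_preimage]
    have hcontφ : Continuous (fun p : ℝ × ℝ => ((p.2, gammaIG c v p) : ℝ × ℝ × ℝ)) :=
      Continuous.prodMk continuous_snd hcont
    refine ⟨hcontφ, fun K hK => ?_⟩
    obtain ⟨R, hR⟩ := hK.isBounded.exists_norm_le
    obtain ⟨M, hM⟩ := hbdd (2 * R + 4 * R)
    refine ((isCompact_Icc (a := -M) (b := M)).prod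
      (isCompact_Icc (a := -R) (b := R))).of_isClosed_subset
      (hK.isClosed.preimage hcontφ) ?_
    intro p hp
    simp only [Set.mem_preimage] at hp
    have hφ : ‖((p.2, gammaIG c v p) : ℝ × ℝ × ℝ)‖ ≤ R := hR _ hp
    have ht : |p.2| ≤ R := by
      have := (norm_fst_le ((p.2, gammaIG c v p) : ℝ × ℝ × ℝ)).trans hφ
      simpa using this
    have hg : ‖gammaIG c v p‖ ≤ R := by
      have := (norm_snd_le ((p.2, gammaIG c v p) : ℝ × ℝ × ℝ)).trans hφ
      simpa using this
    have h2 : enorm2 (gammaIG c v p) ≤ 2 * R :=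
      le_trans (enorm2_le_two_norm' _) (by linarith)
    have hkey' := hkey p.1 p.2
    rw [Prod.mk.eta] at hkey'
    have h3 : enorm2 (c p.1) ≤ 2 * R + 4 * R := by linarith
    exact Set.mem_prod.2 ⟨Set.mem_Icc.2 (abs_le.1 (hM p.1 h3)),
      Set.mem_Icc.2 (abs_le.1 ht)⟩
end
end

section
/- Let γ: ℝ² → ℝ² be the evolution by isothermal gauge of C¹ × C⁰ initial data (c,v), with ϑ a continuous lift of the unit tangent U₀ along c. Suppose there exist s₁ < s₂ with |ϑ(s₂) − ϑ(s₁)| ≥ π (i.e., the image of U₀ contains a closed semi-circle). Then there exist ξ, η ∈ [s₁,s₂] with a_+(ξ) = a_-(η); equivalently, the singular set K_sing = {(s,t) : γ_s(s,t) = 0} intersects the characteristic diamond D(s₁,s₂). -/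
noncomputable section
open Real Set Filter MeasureTheory
open scoped ContDiff ENNReal

/-- d/ds of the d'Alembert formula. -/
lemma pds_gammaIG_eq (c v : ℝ → ℝ × ℝ) (hc : ContDiff ℝ 1 c) (hv : Continuous v)
    (p : ℝ × ℝ) :
    pds (gammaIG c v) p
      = (1 / 2 : ℝ) • (aplus c v (p.1 + p.2) - aminus c v (p.1 - p.2)) := by
  have hG : ∀ y : ℝ, HasDerivAt (fun u => ∫ ζ in (0:ℝ)..u, v ζ) (v y) y := fun y =>
    intervalIntegral.integral_hasDerivAt_right (hv.intervalIntegrable 0 y)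
      (hv.stronglyMeasurableAtFilter _ _) hv.continuousAt
  have h1 : HasDerivAt (fun x : ℝ => c (x + p.2)) (deriv c (p.1 + p.2)) p.1 := by
    have h := ((hc.differentiable one_ne_zero) (p.1 + p.2)).hasDerivAt
    simpa [Function.comp_def] using h.scomp p.1 ((hasDerivAt_id p.1).add_const p.2)
  have h2 : HasDerivAt (fun x : ℝ => c (x - p.2)) (deriv c (p.1 - p.2)) p.1 := by
    have h := ((hc.differentiable one_ne_zero) (p.1 - p.2)).hasDerivAt
    simpa [Function.comp_def] using h.scomp p.1 ((hasDerivAt_id p.1).sub_const p.2)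
  have h3 : HasDerivAt (fun x : ℝ => ∫ ζ in (x - p.2)..(x + p.2), v ζ)
      (v (p.1 + p.2) - v (p.1 - p.2)) p.1 := by
    have hfun : (fun x : ℝ => ∫ ζ in (x - p.2)..(x + p.2), v ζ)
        = fun x : ℝ => (∫ ζ in (0:ℝ)..(x + p.2), v ζ) - ∫ ζ in (0:ℝ)..(x - p.2), v ζ := by
      funext x
      rw [intervalIntegral.integral_interval_sub_left (hv.intervalIntegrable _ _)
        (hv.intervalIntegrable _ _)]
    rw [hfun]
    have ha : HasDerivAt (fun x : ℝ => ∫ ζ in (0:ℝ)..(x + p.2), v ζ) (v (p.1 + p.2)) p.1 := by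
      simpa [Function.comp_def] using (hG (p.1 + p.2)).scomp p.1 ((hasDerivAt_id p.1).add_const p.2)
    have hb : HasDerivAt (fun x : ℝ => ∫ ζ in (0:ℝ)..(x - p.2), v ζ) (v (p.1 - p.2)) p.1 := by
      simpa [Function.comp_def] using (hG (p.1 - p.2)).scomp p.1 ((hasDerivAt_id p.1).sub_const p.2)
    exact ha.sub hb
  have htot : HasDerivAt (fun x : ℝ => gammaIG c v (x, p.2))
      ((1 / 2 : ℝ) • (deriv c (p.1 + p.2) + deriv c (p.1 - p.2)
        + (v (p.1 + p.2) - v (p.1 - p.2)))) p.1 := by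
    have := (((h1.add h2).add h3).const_smul (1 / 2 : ℝ))
    exact this
  have : pds (gammaIG c v) p = (1 / 2 : ℝ) • (deriv c (p.1 + p.2) + deriv c (p.1 - p.2)
      + (v (p.1 + p.2) - v (p.1 - p.2))) := htot.deriv
  rw [this, aplus, aminus]
  congr 1
  abel

/-- If the unit tangent of the initial curve sweeps a closed
semi-circle on [s₁,s₂], then the null directions collide: a₊(ξ) = a₋(η) for some
ξ, η ∈ [s₁,s₂]; equivalently the singular set {γ_s = 0} meets the characteristic
diamond D(s₁,s₂). -/
theorem singular_set_nonempty_of_semicircle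
    (c v : ℝ → ℝ × ℝ) (hdata : IGData c v)
    (ϑ : ℝ → ℝ) (hlift : IsTangentLift c ϑ)
    (s₁ s₂ : ℝ) (hlt : s₁ < s₂) (harc : |ϑ s₂ - ϑ s₁| ≥ π) :
    (∃ ξ ∈ Set.Icc s₁ s₂, ∃ η ∈ Set.Icc s₁ s₂, aplus c v ξ = aminus c v η) ∧
    ∃ p ∈ diamond s₁ s₂, pds (gammaIG c v) p = 0 := by
  obtain ⟨hϑc, hϑ⟩ := hlift
  set r : ℝ → ℝ := fun s => enorm2 (deriv c s) with hr_def
  set ρ : ℝ → ℝ := fun s => -(v s).1 * Real.sin (ϑ s) + (v s).2 * Real.cos (ϑ s) with hρ_def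
  set φ : ℝ → ℝ := fun s => Real.arcsin (ρ s) with hφ_def
  have hnsqc_pos : ∀ s, 0 < nsq (deriv c s) := by
    intro s; have h1 := hdata.hnorm s; have h2 := hdata.hvlt s; linarith
  have hr_pos : ∀ s, 0 < r s := fun s => Real.sqrt_pos.mpr (hnsqc_pos s)
  have hrsq : ∀ s, (r s) ^ 2 = nsq (deriv c s) := fun s =>
    Real.sq_sqrt (le_of_lt (hnsqc_pos s))
  have hc_eq : ∀ s, deriv c s = (r s) • ((Real.cos (ϑ s), Real.sin (ϑ s)) : ℝ × ℝ) := by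
    intro s
    rw [← hϑ s, smul_smul, mul_inv_cancel₀ (ne_of_gt (hr_pos s)), one_smul]
  have hc1 : ∀ s, (deriv c s).1 = r s * Real.cos (ϑ s) := by
    intro s; rw [hc_eq s]; rfl
  have hc2 : ∀ s, (deriv c s).2 = r s * Real.sin (ϑ s) := by
    intro s; rw [hc_eq s]; rfl
  have horth' : ∀ s, Real.cos (ϑ s) * (v s).1 + Real.sin (ϑ s) * (v s).2 = 0 := by
    intro s
    have h := hdata.horth s
    rw [dot2, hc1 s, hc2 s] at h
    have : r s * (Real.cos (ϑ s) * (v s).1 + Real.sin (ϑ s) * (v s).2) = 0 := by ring_nf; linarith [h]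
    rcases mul_eq_zero.mp this with h' | h'
    · exact absurd h' (ne_of_gt (hr_pos s))
    · exact h'
  have hpyth : ∀ s, Real.sin (ϑ s) ^ 2 + Real.cos (ϑ s) ^ 2 = 1 := fun s =>
    Real.sin_sq_add_cos_sq (ϑ s)
  have hv1 : ∀ s, (v s).1 = -(ρ s) * Real.sin (ϑ s) := by
    intro s
    have h := horth' s; have h2 := hpyth s
    simp only [hρ_def]
    linear_combination Real.cos (ϑ s) * h - (v s).1 * h2
  have hv2 : ∀ s, (v s).2 = ρ s * Real.cos (ϑ s) := by
    intro s
    have h := horth' s; have h2 := hpyth s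
    simp only [hρ_def]
    linear_combination Real.sin (ϑ s) * h - (v s).2 * h2
  have hnsqv : ∀ s, nsq (v s) = (ρ s) ^ 2 := by
    intro s
    have h2 := hpyth s
    rw [nsq, dot2, hv1 s, hv2 s]
    nlinarith [h2]
  have hρ_lt : ∀ s, (ρ s) ^ 2 < 1 := by
    intro s; rw [← hnsqv s]; exact hdata.hvlt s
  have hsinφ : ∀ s, Real.sin (φ s) = ρ s := by
    intro s
    apply Real.sin_arcsin
    · nlinarith [hρ_lt s]
    · nlinarith [hρ_lt s]
  have hcosφ : ∀ s, Real.cos (φ s) = r s := by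
    intro s
    rw [hφ_def]
    simp only
    rw [Real.cos_arcsin]
    have h1 : 1 - ρ s ^ 2 = r s ^ 2 := by
      have := hdata.hnorm s
      rw [hnsqv s] at this
      rw [← hrsq s] at this
      linarith
    rw [h1, Real.sqrt_sq (le_of_lt (hr_pos s))]
  have haplus : ∀ s, aplus c v s
      = ((Real.cos (ϑ s + φ s), Real.sin (ϑ s + φ s)) : ℝ × ℝ) := by
    intro s
    have h1 := hv1 s; have h2 := hv2 s; have h3 := hc1 s; have h4 := hc2 s
    have h5 := hsinφ s; have h6 := hcosφ s
    apply Prod.ext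
    · show (v s).1 + (deriv c s).1 = Real.cos (ϑ s + φ s)
      rw [h1, h3, Real.cos_add, h5, h6]; ring
    · show (v s).2 + (deriv c s).2 = Real.sin (ϑ s + φ s)
      rw [h2, h4, Real.sin_add, h5, h6]; ring
  have haminus : ∀ s, aminus c v s
      = ((Real.cos (ϑ s - φ s + π), Real.sin (ϑ s - φ s + π)) : ℝ × ℝ) := by
    intro s
    have h1 := hv1 s; have h2 := hv2 s; have h3 := hc1 s; have h4 := hc2 s
    have h5 := hsinφ s; have h6 := hcosφ s
    apply Prod.ext
    · show (v s).1 - (deriv c s).1 = Real.cos (ϑ s - φ s + π)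
      rw [h1, h3, Real.cos_add_pi, Real.cos_sub, h5, h6]; ring
    · show (v s).2 - (deriv c s).2 = Real.sin (ϑ s - φ s + π)
      rw [h2, h4, Real.sin_add_pi, Real.sin_sub, h5, h6]; ring
  -- continuity of φ
  have hρc : Continuous ρ := by
    apply Continuous.add
    · exact (continuous_fst.comp hdata.hv).neg.mul (Real.continuous_sin.comp hϑc)
    · exact (continuous_snd.comp hdata.hv).mul (Real.continuous_cos.comp hϑc)
  have hφc : Continuous φ := Real.continuous_arcsin.comp hρc
  -- IVT setup
  set P : ℝ → ℝ := fun u => ϑ u - ϑ (s₁ + s₂ - u) + φ u + φ (s₁ + s₂ - u) with hP_def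
  have hPc : Continuous P := by
    have hlin : Continuous (fun u : ℝ => s₁ + s₂ - u) := continuous_const.sub continuous_id
    exact (((hϑc.sub (hϑc.comp hlin)).add hφc).add (hφc.comp hlin))
  have hPdiff : P s₂ - P s₁ = 2 * (ϑ s₂ - ϑ s₁) := by
    simp only [hP_def]
    have e1 : s₁ + s₂ - s₂ = s₁ := by ring
    have e2 : s₁ + s₂ - s₁ = s₂ := by ring
    rw [e1, e2]; ring
  have habs : |P s₂ - P s₁| ≥ 2 * π := by
    rw [hPdiff, abs_mul, abs_two]
    linarith [harc]
  set m : ℝ := min (P s₁) (P s₂) with hm_def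
  set M : ℝ := max (P s₁) (P s₂) with hM_def
  have hMm : M - m = |P s₂ - P s₁| := by
    rw [hm_def, hM_def]
    exact max_sub_min_eq_abs _ _
  set k : ℤ := ⌈(m - π) / (2 * π)⌉ with hk_def
  have hπpos : (0:ℝ) < π := Real.pi_pos
  set y : ℝ := π + 2 * π * k with hy_def
  have hy_ge : m ≤ y := by
    have h := Int.le_ceil ((m - π) / (2 * π))
    have : (m - π) / (2 * π) * (2 * π) ≤ (k : ℝ) * (2 * π) := by
      apply mul_le_mul_of_nonneg_right h (by positivity)
    rw [div_mul_cancel₀ _ (by positivity : (2:ℝ) * π ≠ 0)] at this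
    simp only [hy_def]; linarith
  have hy_le : y ≤ M := by
    have h := Int.ceil_lt_add_one ((m - π) / (2 * π))
    have : (k : ℝ) * (2 * π) < ((m - π) / (2 * π) + 1) * (2 * π) := by
      apply mul_lt_mul_of_pos_right h (by positivity)
    rw [add_mul, div_mul_cancel₀ _ (by positivity : (2:ℝ) * π ≠ 0)] at this
    have hMm' : 2 * π ≤ M - m := by rw [hMm]; linarith [habs]
    simp only [hy_def]; linarith
  have hy_mem : y ∈ Set.uIcc (P s₁) (P s₂) := by
    rw [Set.uIcc_eq_union]
    rcases le_total (P s₁) (P s₂) with h | h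
    · left; constructor
      · calc P s₁ = m := by rw [hm_def, min_eq_left h]
          _ ≤ y := hy_ge
      · calc y ≤ M := hy_le
          _ = P s₂ := by rw [hM_def, max_eq_right h]
    · right; constructor
      · calc P s₂ = m := by rw [hm_def, min_eq_right h]
          _ ≤ y := hy_ge
      · calc y ≤ M := hy_le
          _ = P s₁ := by rw [hM_def, max_eq_left h]
  have hIVT := intermediate_value_uIcc (f := P) (a := s₁) (b := s₂) hPc.continuousOn
  obtain ⟨u, hu_mem, hu_eq⟩ := hIVT hy_mem
  rw [Set.uIcc_of_le (le_of_lt hlt)] at hu_mem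
  set ξ : ℝ := u with hξ_def
  set η : ℝ := s₁ + s₂ - u with hη_def
  have hξ_mem : ξ ∈ Set.Icc s₁ s₂ := hu_mem
  have hη_mem : η ∈ Set.Icc s₁ s₂ := by
    obtain ⟨h1, h2⟩ := hu_mem
    exact ⟨by simp only [hη_def]; linarith, by simp only [hη_def]; linarith⟩
  -- the collision
  have hangle : ϑ ξ + φ ξ = (ϑ η - φ η + π) + (k : ℝ) * (2 * π) := by
    have : P u = y := hu_eq
    simp only [hP_def, hy_def] at this
    simp only [hξ_def, hη_def]
    linarith [this]
  have hcol : aplus c v ξ = aminus c v η := by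
    rw [haplus ξ, haminus η]
    apply Prod.ext
    · show Real.cos (ϑ ξ + φ ξ) = Real.cos (ϑ η - φ η + π)
      rw [hangle]
      exact Real.cos_add_int_mul_two_pi _ k
    · show Real.sin (ϑ ξ + φ ξ) = Real.sin (ϑ η - φ η + π)
      rw [hangle]
      exact Real.sin_add_int_mul_two_pi _ k
  refine ⟨⟨ξ, hξ_mem, η, hη_mem, hcol⟩, ?_⟩
  -- the singular point
  refine ⟨((ξ + η) / 2, (ξ - η) / 2), ?_, ?_⟩
  · obtain ⟨hξ1, hξ2⟩ := hξ_mem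
    obtain ⟨hη1, hη2⟩ := hη_mem
    constructor
    · show s₁ + |(ξ - η) / 2| ≤ (ξ + η) / 2
      rcases abs_cases ((ξ - η) / 2) with ⟨h, _⟩ | ⟨h, _⟩ <;> rw [h] <;> linarith
    · show (ξ + η) / 2 ≤ s₂ - |(ξ - η) / 2|
      rcases abs_cases ((ξ - η) / 2) with ⟨h, _⟩ | ⟨h, _⟩ <;> rw [h] <;> linarith
  · rw [pds_gammaIG_eq c v hdata.hc hdata.hv]
    have e1 : ((ξ + η) / 2, (ξ - η) / 2).1 + ((ξ + η) / 2, (ξ - η) / 2).2 = ξ := by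
      show (ξ + η) / 2 + (ξ - η) / 2 = ξ; ring
    have e2 : ((ξ + η) / 2, (ξ - η) / 2).1 - ((ξ + η) / 2, (ξ - η) / 2).2 = η := by
      show (ξ + η) / 2 - (ξ - η) / 2 = η; ring
    rw [e1, e2, hcol, sub_self, smul_zero]
end
end

section
/- Let c: ℝ → ℝ² be a C¹ immersion (ċ(s) ≠ 0 for all s) with a point of self-intersection: c(r₁) = c(r₂) for some r₁ < r₂. Let ϑ: ℝ → ℝ be a continuous lift of the unit tangent, i.e. ċ(s)/|ċ(s)| = (cos ϑ(s), sin ϑ(s)). Then there exist s₁, s₂ ∈ [r₁, r₂] with ϑ(s₂) − ϑ(s₁) > π; that is, the image of the unit tangent on [r₁,r₂] contains an arc of length greater than π. -/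
noncomputable section
open Real Set

/-- A self-intersecting C¹ immersed planar curve has a unit
tangent sweeping an arc of length > π between the self-intersection parameters. -/
theorem tangent_arc_of_self_intersection
    (c : ℝ → ℝ × ℝ) (hc : ContDiff ℝ 1 c) (himm : ∀ s : ℝ, deriv c s ≠ 0)
    (r₁ r₂ : ℝ) (hr : r₁ < r₂) (hself : c r₁ = c r₂)
    (ϑ : ℝ → ℝ) (hϑcont : Continuous ϑ)
    (hlift : ∀ s : ℝ, (enorm2 (deriv c s))⁻¹ • deriv c s =
      ((Real.cos (ϑ s), Real.sin (ϑ s)) : ℝ × ℝ)) :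
    ∃ s₁ ∈ Set.Icc r₁ r₂, ∃ s₂ ∈ Set.Icc r₁ r₂, ϑ s₂ - ϑ s₁ > π := by
  by_contra hcon
  push_neg at hcon
  -- the speed is positive
  have npos : ∀ s, 0 < enorm2 (deriv c s) := by
    intro s
    apply Real.sqrt_pos.mpr
    have h := himm s
    have h12 : (deriv c s).1 ≠ 0 ∨ (deriv c s).2 ≠ 0 := by
      by_contra hh
      push_neg at hh
      exact h (Prod.ext hh.1 hh.2)
    unfold nsq dot2
    rcases h12 with h1 | h1
    · exact add_pos_of_pos_of_nonneg (mul_self_pos.mpr h1) (mul_self_nonneg _)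
    · exact add_pos_of_nonneg_of_pos (mul_self_nonneg _) (mul_self_pos.mpr h1)
  set n : ℝ → ℝ := fun s => enorm2 (deriv c s) with hn
  have hne : ∀ s, n s ≠ 0 := fun s => (npos s).ne'
  have hderiv1 : ∀ s, (deriv c s).1 = n s * Real.cos (ϑ s) := by
    intro s
    have h := congrArg Prod.fst (hlift s)
    simp only [Prod.smul_fst, smul_eq_mul] at h
    rw [← h]
    exact (mul_inv_cancel_left₀ (npos s).ne' _).symm
  have hderiv2 : ∀ s, (deriv c s).2 = n s * Real.sin (ϑ s) := by
    intro s
    have h := congrArg Prod.snd (hlift s)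
    simp only [Prod.smul_snd, smul_eq_mul] at h
    rw [← h]
    exact (mul_inv_cancel_left₀ (npos s).ne' _).symm
  have hdc : Differentiable ℝ c := hc.differentiable one_ne_zero
  -- derivative of the projection onto direction of angle α
  have key : ∀ α s, HasDerivAt (fun t => (c t).1 * Real.cos α + (c t).2 * Real.sin α)
      (n s * Real.cos (ϑ s - α)) s := by
    intro α s
    have h1 : HasDerivAt (fun t => (c t).1) (deriv c s).1 s := by
      have := ((hdc s).hasDerivAt.hasFDerivAt.fst).hasDerivAt
      simpa using this
    have h2 : HasDerivAt (fun t => (c t).2) (deriv c s).2 s := by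
      have := ((hdc s).hasDerivAt.hasFDerivAt.snd).hasDerivAt
      simpa using this
    have h := (h1.mul_const (Real.cos α)).add (h2.mul_const (Real.sin α))
    refine h.congr_deriv ?_
    rw [hderiv1, hderiv2, Real.cos_sub]
    ring
  -- min of ϑ on the interval
  obtain ⟨smin, hsmin, hmin⟩ := isCompact_Icc.exists_isMinOn (nonempty_Icc.mpr hr.le)
    hϑcont.continuousOn
  set θm : ℝ := ϑ smin with hθm
  have hlo : ∀ s ∈ Icc r₁ r₂, θm ≤ ϑ s := fun s hs => hmin hs
  have hhi : ∀ s ∈ Icc r₁ r₂, ϑ s ≤ θm + π := by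
    intro s hs
    have := hcon smin hsmin s hs
    linarith
  -- the projection onto direction θm + π/2 is monotone
  set α : ℝ := θm + π / 2 with hα
  set f : ℝ → ℝ := fun t => (c t).1 * Real.cos α + (c t).2 * Real.sin α with hf
  have hfd : ∀ s, HasDerivAt f (n s * Real.cos (ϑ s - α)) s := key α
  have hfmono : MonotoneOn f (Icc r₁ r₂) := by
    apply monotoneOn_of_deriv_nonneg (convex_Icc r₁ r₂)
    · exact Continuous.continuousOn (by fun_prop)
    · exact fun x _ => (hfd x).differentiableAt.differentiableWithinAt
    · intro x hx
      rw [interior_Icc] at hx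
      rw [(hfd x).deriv]
      have h1 : -(π/2) ≤ ϑ x - α := by
        have := hlo x (Ioo_subset_Icc_self hx); simp only [hα]; linarith
      have h2 : ϑ x - α ≤ π/2 := by
        have := hhi x (Ioo_subset_Icc_self hx); simp only [hα]; linarith
      have := Real.cos_nonneg_of_mem_Icc ⟨h1, h2⟩
      exact mul_nonneg (npos x).le this
  -- f has equal endpoints, hence is constant
  have hf12 : f r₁ = f r₂ := by simp only [hf, hself]
  have hfconst : ∀ s ∈ Icc r₁ r₂, f s = f r₁ := by
    intro s hs
    have h1 := hfmono (left_mem_Icc.mpr hr.le) hs hs.1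
    have h2 := hfmono hs (right_mem_Icc.mpr hr.le) hs.2
    linarith
  -- so its derivative vanishes in the interior, forcing ϑ ∈ {θm, θm + π}
  have hval : ∀ s ∈ Ioo r₁ r₂, ϑ s = θm ∨ ϑ s = θm + π := by
    intro s hs
    have hev : f =ᶠ[nhds s] (fun _ => f r₁) := by
      filter_upwards [Ioo_mem_nhds hs.1 hs.2] with t ht
      exact hfconst t (Ioo_subset_Icc_self ht)
    have hd0 : deriv f s = 0 := by
      rw [hev.deriv_eq]; simp
    rw [(hfd s).deriv] at hd0
    have hcos0 : Real.cos (ϑ s - α) = 0 := by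
      rcases mul_eq_zero.mp hd0 with h | h
      · exact absurd h (hne s)
      · exact h
    have h1 : -(π/2) ≤ ϑ s - α := by
      have := hlo s (Ioo_subset_Icc_self hs); simp only [hα]; linarith
    have h2 : ϑ s - α ≤ π/2 := by
      have := hhi s (Ioo_subset_Icc_self hs); simp only [hα]; linarith
    rcases eq_or_lt_of_le h1 with he | h1'
    · left; linarith [hα]
    rcases eq_or_lt_of_le h2 with he | h2'
    · right; linarith [hα]
    exfalso
    have := Real.cos_pos_of_mem_Ioo ⟨h1', h2'⟩
    rw [hcos0] at this
    exact lt_irrefl 0 this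
  -- ϑ is constant on the open interval
  set s₀ : ℝ := (r₁ + r₂) / 2 with hs₀
  have hs₀mem : s₀ ∈ Ioo r₁ r₂ :=
    ⟨by show r₁ < (r₁ + r₂) / 2; linarith, by show (r₁ + r₂) / 2 < r₂; linarith⟩
  set θ₀ : ℝ := ϑ s₀ with hθ₀
  have hconstθ : ∀ s ∈ Ioo r₁ r₂, ϑ s = θ₀ := by
    intro s hs
    by_contra hne'
    have huIcc : uIcc s₀ s ⊆ Ioo r₁ r₂ :=
      (Set.ordConnected_Ioo).uIcc_subset hs₀mem hs
    have hmid : θm + π/2 ∈ uIcc (ϑ s₀) (ϑ s) := by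
      have hpi := Real.pi_pos
      rcases hval s₀ hs₀mem with ha | ha <;> rcases hval s hs with hb | hb
      · exact absurd (hb.trans ha.symm) hne'
      · rw [ha, hb, Set.uIcc_of_le (by linarith)]
        constructor <;> linarith
      · rw [ha, hb, Set.uIcc_of_ge (by linarith)]
        constructor <;> linarith
      · exact absurd (hb.trans ha.symm) hne'
    obtain ⟨t, ht, htv⟩ := intermediate_value_uIcc (hϑcont.continuousOn) hmid
    have htIoo : t ∈ Ioo r₁ r₂ := huIcc ht
    have hpi := Real.pi_pos
    rcases hval t htIoo with h | h <;> rw [htv] at h <;> linarith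
  -- but then the curve moves strictly in direction θ₀, contradiction
  set g : ℝ → ℝ := fun t => (c t).1 * Real.cos θ₀ + (c t).2 * Real.sin θ₀ with hg
  have hgmono : StrictMonoOn g (Icc r₁ r₂) := by
    apply strictMonoOn_of_deriv_pos (convex_Icc r₁ r₂)
    · exact Continuous.continuousOn (by fun_prop)
    · intro x hx
      rw [interior_Icc] at hx
      rw [(key θ₀ x).deriv, hconstθ x hx]
      simp [npos x]
      exact npos x
  have : g r₁ < g r₂ := hgmono (left_mem_Icc.mpr hr.le) (right_mem_Icc.mpr hr.le) hr
  simp only [hg, hself] at this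
  exact lt_irrefl _ this
end
end

section
/- Let γ: ℝ² → ℝ² be the evolution by isothermal gauge of C¹ × C⁰ initial data (c,v), with ϑ a continuous lift of the unit tangent U₀ along c. Suppose that for some s₁ < s₂, sup_{r₁,r₂ ∈ [s₁,s₂]} |ϑ(r₂) − ϑ(r₁)|² + sup_{r ∈ [s₁,s₂]} |v(r)|² < 1. Then a_+(ξ) ≠ a_-(η) for all ξ, η ∈ [s₁,s₂], and consequently γ_s(s,t) ≠ 0 for every (s,t) in the characteristic diamond D(s₁,s₂). -/
noncomputable section
open Real Set Filter MeasureTheory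
open scoped ContDiff ENNReal

/-- A smallness condition on the oscillation of the tangent angle
and on the initial velocity over [s₁,s₂] rules out singularities in the
characteristic diamond D(s₁,s₂). -/
theorem no_singularity_in_diamond
    (c v : ℝ → ℝ × ℝ) (hdata : IGData c v)
    (ϑ : ℝ → ℝ) (hlift : IsTangentLift c ϑ)
    (s₁ s₂ : ℝ) (hlt : s₁ < s₂)
    (hsmall : ∀ r₁ ∈ Set.Icc s₁ s₂, ∀ r₂ ∈ Set.Icc s₁ s₂, ∀ r ∈ Set.Icc s₁ s₂,
      |ϑ r₂ - ϑ r₁| ^ 2 + nsq (v r) < 1) :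
    (∀ ξ ∈ Set.Icc s₁ s₂, ∀ η ∈ Set.Icc s₁ s₂, aplus c v ξ ≠ aminus c v η) ∧
    ∀ p ∈ diamond s₁ s₂, pds (gammaIG c v) p ≠ 0 := by
  obtain ⟨hϑc, hϑ⟩ := hlift
  have hnsq_nonneg : ∀ a : ℝ × ℝ, 0 ≤ nsq a := fun a => by
    simp only [nsq, dot2]; nlinarith [sq_nonneg a.1, sq_nonneg a.2]
  have hm_pos : ∀ s, 0 < enorm2 (deriv c s) := by
    intro s
    have h1 : 0 < nsq (deriv c s) := by
      have h2 := hdata.hnorm s; have h3 := hdata.hvlt s; linarith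
    exact Real.sqrt_pos.mpr h1
  have hstruct : ∀ s, ∃ m : ℝ, 0 < m ∧ m ^ 2 + nsq (v s) = 1 ∧
      deriv c s = (m * Real.cos (ϑ s), m * Real.sin (ϑ s)) := by
    intro s
    refine ⟨enorm2 (deriv c s), hm_pos s, ?_, ?_⟩
    · rw [enorm2, Real.sq_sqrt (hnsq_nonneg _)]; exact hdata.hnorm s
    · have h := hϑ s
      have h2 : enorm2 (deriv c s) • ((enorm2 (deriv c s))⁻¹ • deriv c s)
          = enorm2 (deriv c s) • ((Real.cos (ϑ s), Real.sin (ϑ s)) : ℝ × ℝ) := by rw [h]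
      rw [smul_smul, mul_inv_cancel₀ (hm_pos s).ne', one_smul] at h2
      exact h2.trans (by rw [Prod.smul_mk, smul_eq_mul, smul_eq_mul])
  have key : ∀ ξ ∈ Set.Icc s₁ s₂, ∀ η ∈ Set.Icc s₁ s₂, aplus c v ξ ≠ aminus c v η := by
    intro ξ hξ η hη heq
    have hpy : Real.sin (ϑ ξ) ^ 2 + Real.cos (ϑ ξ) ^ 2 = 1 := Real.sin_sq_add_cos_sq _
    have hpy' : Real.sin (ϑ η) ^ 2 + Real.cos (ϑ η) ^ 2 = 1 := Real.sin_sq_add_cos_sq _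
    obtain ⟨m, hm0, hmn, hmc⟩ := hstruct ξ
    obtain ⟨m', hm'0, hm'n, hm'c⟩ := hstruct η
    -- orthogonality in angle form
    have horξ : Real.cos (ϑ ξ) * (v ξ).1 + Real.sin (ϑ ξ) * (v ξ).2 = 0 := by
      have h := hdata.horth ξ
      rw [hmc] at h
      simp only [dot2] at h
      have h2 : m * (Real.cos (ϑ ξ) * (v ξ).1 + Real.sin (ϑ ξ) * (v ξ).2) = 0 := by
        linear_combination h
      exact (mul_eq_zero.mp h2).resolve_left hm0.ne'
    have horη : Real.cos (ϑ η) * (v η).1 + Real.sin (ϑ η) * (v η).2 = 0 := by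
      have h := hdata.horth η
      rw [hm'c] at h
      simp only [dot2] at h
      have h2 : m' * (Real.cos (ϑ η) * (v η).1 + Real.sin (ϑ η) * (v η).2) = 0 := by
        linear_combination h
      exact (mul_eq_zero.mp h2).resolve_left hm'0.ne'
    set n' : ℝ := -(v η).1 * Real.sin (ϑ η) + (v η).2 * Real.cos (ϑ η) with hn'def
    have hq1 : (v η).1 = -(n' * Real.sin (ϑ η)) := by
      rw [hn'def]
      linear_combination Real.cos (ϑ η) * horη - (v η).1 * hpy'
    have hq2 : (v η).2 = n' * Real.cos (ϑ η) := by
      rw [hn'def]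
      linear_combination Real.sin (ϑ η) * horη - (v η).2 * hpy'
    have hn'sq : n' ^ 2 = nsq (v η) := by
      rw [nsq, dot2, hq1, hq2]
      linear_combination -n' ^ 2 * hpy'
    -- component equations from heq
    have h1 : (v ξ).1 + m * Real.cos (ϑ ξ) = (v η).1 - m' * Real.cos (ϑ η) := by
      have h := congrArg Prod.fst heq
      simpa [aplus, aminus, hmc, hm'c] using h
    have h2 : (v ξ).2 + m * Real.sin (ϑ ξ) = (v η).2 - m' * Real.sin (ϑ η) := by
      have h := congrArg Prod.snd heq
      simpa [aplus, aminus, hmc, hm'c] using h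
    rw [hq1] at h1
    rw [hq2] at h2
    -- key scalar equation
    have hkey : m = n' * Real.sin (ϑ ξ - ϑ η) - m' * Real.cos (ϑ ξ - ϑ η) := by
      rw [Real.sin_sub, Real.cos_sub]
      linear_combination Real.cos (ϑ ξ) * h1 + Real.sin (ϑ ξ) * h2 - m * hpy - horξ
    -- inequalities
    have hsm : |ϑ ξ - ϑ η| ^ 2 + nsq (v ξ) < 1 := hsmall η hη ξ hξ ξ hξ
    have hvη := hdata.hvlt η
    have hmΔ : |ϑ ξ - ϑ η| < m := by
      have ha : |ϑ ξ - ϑ η| ^ 2 < m ^ 2 := by linarith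
      exact lt_of_pow_lt_pow_left₀ 2 hm0.le ha
    have hn'le : |n'| ≤ 1 := by
      rw [abs_le_one_iff_mul_self_le_one]
      nlinarith
    have hsinle : |Real.sin (ϑ ξ - ϑ η)| ≤ |ϑ ξ - ϑ η| := Real.abs_sin_le_abs
    have hcos : 0 < Real.cos (ϑ ξ - ϑ η) := by
      have habs : |ϑ ξ - ϑ η| < 1 := by
        nlinarith [hnsq_nonneg (v ξ), abs_nonneg (ϑ ξ - ϑ η), sq_nonneg (|ϑ ξ - ϑ η| - 1)]
      have hpi := Real.pi_gt_three
      rcases abs_lt.mp habs with ⟨hl, hr⟩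
      exact Real.cos_pos_of_mem_Ioo ⟨by linarith, by linarith⟩
    have hfin : n' * Real.sin (ϑ ξ - ϑ η) ≤ |ϑ ξ - ϑ η| := by
      calc n' * Real.sin (ϑ ξ - ϑ η) ≤ |n' * Real.sin (ϑ ξ - ϑ η)| := le_abs_self _
        _ = |n'| * |Real.sin (ϑ ξ - ϑ η)| := abs_mul _ _
        _ ≤ 1 * |ϑ ξ - ϑ η| := mul_le_mul hn'le hsinle (abs_nonneg _) zero_le_one
        _ = |ϑ ξ - ϑ η| := one_mul _
    have hm'cos : 0 < m' * Real.cos (ϑ ξ - ϑ η) := mul_pos hm'0 hcos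
    linarith
  refine ⟨key, ?_⟩
  -- derivative of gammaIG in s
  have hcd : ∀ y, HasDerivAt c (deriv c y) y := fun y =>
    ((hdata.hc.differentiable one_ne_zero) y).hasDerivAt
  have hG : ∀ y : ℝ, HasDerivAt (fun u : ℝ => ∫ ζ in (0:ℝ)..u, v ζ) (v y) y := fun y =>
    (hdata.hv.integral_hasStrictDerivAt 0 y).hasDerivAt
  have hder : ∀ (t x : ℝ), HasDerivAt (fun y : ℝ => gammaIG c v (y, t))
      ((1/2 : ℝ) • (aplus c v (x + t) - aminus c v (x - t))) x := by
    intro t x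
    have hsplit : ∀ y : ℝ, (∫ ζ in (y - t)..(y + t), v ζ)
        = (∫ ζ in (0:ℝ)..(y + t), v ζ) - ∫ ζ in (0:ℝ)..(y - t), v ζ :=
      fun y => (intervalIntegral.integral_interval_sub_left
        (hdata.hv.intervalIntegrable _ _) (hdata.hv.intervalIntegrable _ _)).symm
    have heqf : (fun y : ℝ => gammaIG c v (y, t)) = fun y : ℝ => (1/2 : ℝ) •
        (c (y + t) + c (y - t) +
          ((∫ ζ in (0:ℝ)..(y + t), v ζ) - ∫ ζ in (0:ℝ)..(y - t), v ζ)) := by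
      funext y; simp only [gammaIG]; rw [hsplit y]
    rw [heqf]
    have hadd : HasDerivAt (fun y : ℝ => y + t) (1 : ℝ) x := by
      simpa using (hasDerivAt_id x).add_const t
    have hsub : HasDerivAt (fun y : ℝ => y - t) (1 : ℝ) x := by
      simpa using (hasDerivAt_id x).sub_const t
    have h1 : HasDerivAt (fun y : ℝ => c (y + t)) (deriv c (x + t)) x := by
      simpa [Function.comp_def] using HasDerivAt.scomp x (hcd (x + t)) hadd
    have h2 : HasDerivAt (fun y : ℝ => c (y - t)) (deriv c (x - t)) x := by
      simpa [Function.comp_def] using HasDerivAt.scomp x (hcd (x - t)) hsub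
    have h3 : HasDerivAt (fun y : ℝ => ∫ ζ in (0:ℝ)..(y + t), v ζ) (v (x + t)) x := by
      simpa [Function.comp_def] using HasDerivAt.scomp x (hG (x + t)) hadd
    have h4 : HasDerivAt (fun y : ℝ => ∫ ζ in (0:ℝ)..(y - t), v ζ) (v (x - t)) x := by
      simpa [Function.comp_def] using HasDerivAt.scomp x (hG (x - t)) hsub
    have H := ((h1.add h2).add (h3.sub h4)).const_smul ((1:ℝ)/2)
    refine HasDerivAt.congr_deriv H ?_
    simp only [aplus, aminus]
    module
  intro p hp hzero
  obtain ⟨hp1, hp2⟩ := hp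
  have habs1 := le_abs_self p.2
  have habs2 := neg_abs_le p.2
  have hmem1 : p.1 + p.2 ∈ Set.Icc s₁ s₂ := ⟨by linarith, by linarith⟩
  have hmem2 : p.1 - p.2 ∈ Set.Icc s₁ s₂ := ⟨by linarith, by linarith⟩
  have hd : pds (gammaIG c v) p
      = (1/2 : ℝ) • (aplus c v (p.1 + p.2) - aminus c v (p.1 - p.2)) :=
    (hder p.2 p.1).deriv
  rw [hd] at hzero
  rcases smul_eq_zero.mp hzero with h | h
  · norm_num at h
  · exact key _ hmem1 _ hmem2 (sub_eq_zero.mp h)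
end
end

section
/- Evolution of a straight line: let c(s) = (c¹(s), 0) where c¹: ℝ → ℝ is smooth with (c¹)'(s) > 0 for all s and c¹(s) → ±∞ as s → ±∞, and let v(s) = (0, v²(s)) with v² smooth and (c¹)'(s)² + v²(s)² = 1 for all s (so that (c,v) is admissible initial data for the isothermal gauge). Then the evolution by isothermal gauge γ of (c,v) satisfies γ_s(s,t) ≠ 0 for every (s,t) ∈ ℝ²; hence φ(s,t) = (t, γ(s,t)) is a smooth proper timelike immersion with vanishing mean curvature whose image contains the straight line {(0, x¹, 0) : x¹ ∈ ℝ}. -/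
noncomputable section
open Real Set Filter MeasureTheory
open scoped ContDiff ENNReal

/-- Second partial derivatives. -/
def pdss (γ : ℝ × ℝ → ℝ × ℝ) (p : ℝ × ℝ) : ℝ × ℝ := deriv (fun x => pds γ (x, p.2)) p.1
def pdtt (γ : ℝ × ℝ → ℝ × ℝ) (p : ℝ × ℝ) : ℝ × ℝ := deriv (fun y => pdt γ (p.1, y)) p.2

/-- The evolution by isothermal gauge of a straight line, with any
smooth admissible velocity, never becomes singular: it is a smooth proper timelike
immersion with vanishing mean curvature whose image contains the line. -/
theorem straight_line_global_evolution
    (c1 v2 : ℝ → ℝ)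
    (hc1 : ContDiff ℝ ∞ c1) (hv2 : ContDiff ℝ ∞ v2)
    (hpos : ∀ s : ℝ, 0 < deriv c1 s)
    (htop : Tendsto c1 atTop atTop) (hbot : Tendsto c1 atBot atBot)
    (hconstraint : ∀ s : ℝ, (deriv c1 s) ^ 2 + (v2 s) ^ 2 = 1)
    (c v : ℝ → ℝ × ℝ)
    (hc : c = fun s => ((c1 s, 0) : ℝ × ℝ))
    (hv : v = fun s => ((0, v2 s) : ℝ × ℝ)) :
    (∀ p : ℝ × ℝ, pds (gammaIG c v) p ≠ 0) ∧
    ContDiff ℝ ∞ (fun p : ℝ × ℝ => ((p.2, gammaIG c v p) : ℝ × ℝ × ℝ)) ∧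
    IsProperMap (fun p : ℝ × ℝ => ((p.2, gammaIG c v p) : ℝ × ℝ × ℝ)) ∧
    (∀ p : ℝ × ℝ,
      nsq (pds (gammaIG c v) p) * (nsq (pdt (gammaIG c v) p) - 1) -
        (dot2 (pds (gammaIG c v) p) (pdt (gammaIG c v) p)) ^ 2 < 0) ∧
    (∀ p : ℝ × ℝ, pdtt (gammaIG c v) p = pdss (gammaIG c v) p) ∧
    ∀ x : ℝ, ((0 : ℝ), (x : ℝ), (0 : ℝ)) ∈
      Set.range (fun p : ℝ × ℝ => ((p.2, gammaIG c v p) : ℝ × ℝ × ℝ)) := by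
  have hv2c : Continuous v2 := hv2.continuous
  have hc1c : Continuous c1 := hc1.continuous
  set W : ℝ → ℝ := fun x => ∫ ζ in (0:ℝ)..x, v2 ζ with hWdef
  have hWd : ∀ x : ℝ, HasDerivAt W (v2 x) x := fun x =>
    intervalIntegral.integral_hasDerivAt_right (hv2c.intervalIntegrable _ _)
      hv2c.aestronglyMeasurable.stronglyMeasurableAtFilter hv2c.continuousAt
  have hWsm : ContDiff ℝ ∞ W := by
    refine contDiff_infty_iff_deriv.2 ⟨fun x => (hWd x).differentiableAt, ?_⟩
    have : deriv W = v2 := funext fun x => (hWd x).deriv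
    rw [this]; exact hv2
  -- explicit formula for γ
  have hGamma : ∀ p : ℝ × ℝ, gammaIG c v p =
      ((c1 (p.1 + p.2) + c1 (p.1 - p.2)) / 2, (W (p.1 + p.2) - W (p.1 - p.2)) / 2) := by
    intro p
    have hint : (∫ ζ in (p.1 - p.2)..(p.1 + p.2), v ζ)
        = ((0 : ℝ), W (p.1 + p.2) - W (p.1 - p.2)) := by
      rw [hv]
      have h1 : (fun ζ : ℝ => ((0 : ℝ), v2 ζ)) = fun ζ => v2 ζ • ((0 : ℝ), (1 : ℝ)) := by
        funext ζ; simp [Prod.ext_iff]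
      rw [h1, intervalIntegral.integral_smul_const]
      have h2 : (∫ ζ in (p.1 - p.2)..(p.1 + p.2), v2 ζ) = W (p.1 + p.2) - W (p.1 - p.2) := by
        rw [hWdef]
        exact (intervalIntegral.integral_interval_sub_left
          (hv2c.intervalIntegrable _ _) (hv2c.intervalIntegrable _ _)).symm
      rw [h2]; simp [Prod.ext_iff]
    rw [gammaIG, hc, hint]
    simp [Prod.ext_iff, smul_eq_mul]
    constructor <;> ring
  have hc1d : ∀ x : ℝ, HasDerivAt c1 (deriv c1 x) x :=
    fun x => (hc1.differentiable (by norm_num) x).hasDerivAt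
  set D : ℝ → ℝ := deriv c1 with hDdef
  have hDsm : ContDiff ℝ ∞ D := (contDiff_infty_iff_deriv.1 hc1).2
  have hDd : ∀ x : ℝ, HasDerivAt D (deriv D x) x :=
    fun x => (hDsm.differentiable (by norm_num) x).hasDerivAt
  have hv2d : ∀ x : ℝ, HasDerivAt v2 (deriv v2 x) x :=
    fun x => (hv2.differentiable (by norm_num) x).hasDerivAt
  -- first partial derivatives
  have key_s : ∀ p : ℝ × ℝ, HasDerivAt (fun x => gammaIG c v (x, p.2))
      (((D (p.1 + p.2) + D (p.1 - p.2)) / 2, (v2 (p.1 + p.2) - v2 (p.1 - p.2)) / 2)) p.1 := by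
    intro p
    have hfun : (fun x => gammaIG c v (x, p.2)) =
        fun x => (((c1 (x + p.2) + c1 (x - p.2)) / 2, (W (x + p.2) - W (x - p.2)) / 2) : ℝ × ℝ) :=
      funext fun x => hGamma (x, p.2)
    rw [hfun]
    have h1 : HasDerivAt (fun x => c1 (x + p.2)) (D (p.1 + p.2)) p.1 := by
      simpa [Function.comp_def] using (hc1d (p.1 + p.2)).comp p.1 ((hasDerivAt_id p.1).add_const p.2)
    have h2 : HasDerivAt (fun x => c1 (x - p.2)) (D (p.1 - p.2)) p.1 := by
      simpa [Function.comp_def] using (hc1d (p.1 - p.2)).comp p.1 ((hasDerivAt_id p.1).sub_const p.2)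
    have h3 : HasDerivAt (fun x => W (x + p.2)) (v2 (p.1 + p.2)) p.1 := by
      simpa [Function.comp_def] using (hWd (p.1 + p.2)).comp p.1 ((hasDerivAt_id p.1).add_const p.2)
    have h4 : HasDerivAt (fun x => W (x - p.2)) (v2 (p.1 - p.2)) p.1 := by
      simpa [Function.comp_def] using (hWd (p.1 - p.2)).comp p.1 ((hasDerivAt_id p.1).sub_const p.2)
    exact ((h1.add h2).div_const 2).prodMk ((h3.sub h4).div_const 2)
  have key_t : ∀ p : ℝ × ℝ, HasDerivAt (fun y => gammaIG c v (p.1, y))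
      (((D (p.1 + p.2) - D (p.1 - p.2)) / 2, (v2 (p.1 + p.2) + v2 (p.1 - p.2)) / 2)) p.2 := by
    intro p
    have hfun : (fun y => gammaIG c v (p.1, y)) =
        fun y => (((c1 (p.1 + y) + c1 (p.1 - y)) / 2, (W (p.1 + y) - W (p.1 - y)) / 2) : ℝ × ℝ) :=
      funext fun y => hGamma (p.1, y)
    rw [hfun]
    have h1 : HasDerivAt (fun y => c1 (p.1 + y)) (D (p.1 + p.2)) p.2 := by
      simpa [Function.comp_def] using (hc1d (p.1 + p.2)).comp p.2 ((hasDerivAt_id p.2).const_add p.1)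
    have h2 : HasDerivAt (fun y => c1 (p.1 - y)) (-D (p.1 - p.2)) p.2 := by
      simpa [Function.comp_def] using (hc1d (p.1 - p.2)).comp p.2 ((hasDerivAt_id p.2).const_sub p.1)
    have h3 : HasDerivAt (fun y => W (p.1 + y)) (v2 (p.1 + p.2)) p.2 := by
      simpa [Function.comp_def] using (hWd (p.1 + p.2)).comp p.2 ((hasDerivAt_id p.2).const_add p.1)
    have h4 : HasDerivAt (fun y => W (p.1 - y)) (-v2 (p.1 - p.2)) p.2 := by
      simpa [Function.comp_def] using (hWd (p.1 - p.2)).comp p.2 ((hasDerivAt_id p.2).const_sub p.1)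
    have := ((h1.add h2).div_const 2).prodMk ((h3.sub h4).div_const 2)
    simp only [Pi.add_apply, Pi.sub_apply] at this
    convert this using 2 <;> ring
  have hpds : ∀ p : ℝ × ℝ, pds (gammaIG c v) p =
      (((D (p.1 + p.2) + D (p.1 - p.2)) / 2, (v2 (p.1 + p.2) - v2 (p.1 - p.2)) / 2)) :=
    fun p => (key_s p).deriv
  have hpdt : ∀ p : ℝ × ℝ, pdt (gammaIG c v) p =
      (((D (p.1 + p.2) - D (p.1 - p.2)) / 2, (v2 (p.1 + p.2) + v2 (p.1 - p.2)) / 2)) :=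
    fun p => (key_t p).deriv
  -- second partial derivatives
  have hpdss : ∀ p : ℝ × ℝ, pdss (gammaIG c v) p =
      (((deriv D (p.1 + p.2) + deriv D (p.1 - p.2)) / 2,
        (deriv v2 (p.1 + p.2) - deriv v2 (p.1 - p.2)) / 2)) := by
    intro p
    have hfun : (fun x => pds (gammaIG c v) (x, p.2)) =
        fun x => (((D (x + p.2) + D (x - p.2)) / 2, (v2 (x + p.2) - v2 (x - p.2)) / 2) : ℝ × ℝ) :=
      funext fun x => hpds (x, p.2)
    rw [pdss, hfun]
    have h1 : HasDerivAt (fun x => D (x + p.2)) (deriv D (p.1 + p.2)) p.1 := by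
      simpa [Function.comp_def] using (hDd (p.1 + p.2)).comp p.1 ((hasDerivAt_id p.1).add_const p.2)
    have h2 : HasDerivAt (fun x => D (x - p.2)) (deriv D (p.1 - p.2)) p.1 := by
      simpa [Function.comp_def] using (hDd (p.1 - p.2)).comp p.1 ((hasDerivAt_id p.1).sub_const p.2)
    have h3 : HasDerivAt (fun x => v2 (x + p.2)) (deriv v2 (p.1 + p.2)) p.1 := by
      simpa [Function.comp_def] using (hv2d (p.1 + p.2)).comp p.1 ((hasDerivAt_id p.1).add_const p.2)
    have h4 : HasDerivAt (fun x => v2 (x - p.2)) (deriv v2 (p.1 - p.2)) p.1 := by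
      simpa [Function.comp_def] using (hv2d (p.1 - p.2)).comp p.1 ((hasDerivAt_id p.1).sub_const p.2)
    exact (((h1.add h2).div_const 2).prodMk ((h3.sub h4).div_const 2)).deriv
  have hpdtt : ∀ p : ℝ × ℝ, pdtt (gammaIG c v) p =
      (((deriv D (p.1 + p.2) + deriv D (p.1 - p.2)) / 2,
        (deriv v2 (p.1 + p.2) - deriv v2 (p.1 - p.2)) / 2)) := by
    intro p
    have hfun : (fun y => pdt (gammaIG c v) (p.1, y)) =
        fun y => (((D (p.1 + y) - D (p.1 - y)) / 2, (v2 (p.1 + y) + v2 (p.1 - y)) / 2) : ℝ × ℝ) :=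
      funext fun y => hpdt (p.1, y)
    rw [pdtt, hfun]
    have h1 : HasDerivAt (fun y => D (p.1 + y)) (deriv D (p.1 + p.2)) p.2 := by
      simpa [Function.comp_def] using (hDd (p.1 + p.2)).comp p.2 ((hasDerivAt_id p.2).const_add p.1)
    have h2 : HasDerivAt (fun y => D (p.1 - y)) (-deriv D (p.1 - p.2)) p.2 := by
      simpa [Function.comp_def] using (hDd (p.1 - p.2)).comp p.2 ((hasDerivAt_id p.2).const_sub p.1)
    have h3 : HasDerivAt (fun y => v2 (p.1 + y)) (deriv v2 (p.1 + p.2)) p.2 := by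
      simpa [Function.comp_def] using (hv2d (p.1 + p.2)).comp p.2 ((hasDerivAt_id p.2).const_add p.1)
    have h4 : HasDerivAt (fun y => v2 (p.1 - y)) (-deriv v2 (p.1 - p.2)) p.2 := by
      simpa [Function.comp_def] using (hv2d (p.1 - p.2)).comp p.2 ((hasDerivAt_id p.2).const_sub p.1)
    have := (((h1.sub h2).div_const 2).prodMk ((h3.add h4).div_const 2)).deriv
    simp only [Pi.add_apply, Pi.sub_apply] at this
    rw [this, Prod.mk.injEq]
    constructor <;> ring
  -- the map φ written explicitly
  have hPhi : (fun p : ℝ × ℝ => ((p.2, gammaIG c v p) : ℝ × ℝ × ℝ)) =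
      fun p : ℝ × ℝ => ((p.2, ((c1 (p.1 + p.2) + c1 (p.1 - p.2)) / 2,
        (W (p.1 + p.2) - W (p.1 - p.2)) / 2)) : ℝ × ℝ × ℝ) :=
    funext fun p => by rw [hGamma p]
  have hadd : ContDiff ℝ ∞ (fun p : ℝ × ℝ => p.1 + p.2) := contDiff_fst.add contDiff_snd
  have hsub : ContDiff ℝ ∞ (fun p : ℝ × ℝ => p.1 - p.2) := contDiff_fst.sub contDiff_snd
  have hsmooth : ContDiff ℝ ∞ (fun p : ℝ × ℝ => ((p.2, gammaIG c v p) : ℝ × ℝ × ℝ)) := by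
    rw [hPhi]
    exact contDiff_snd.prodMk
      ((((hc1.comp hadd).add (hc1.comp hsub)).div_const 2).prodMk
        (((hWsm.comp hadd).sub (hWsm.comp hsub)).div_const 2))
  refine ⟨?_, hsmooth, ?_, ?_, ?_, ?_⟩
  · -- γ_s ≠ 0
    intro p hp
    rw [hpds p] at hp
    have h1 : (D (p.1 + p.2) + D (p.1 - p.2)) / 2 > 0 := by
      have := hpos (p.1 + p.2); have := hpos (p.1 - p.2); rw [← hDdef] at *; linarith
    have := congrArg Prod.fst hp
    simp at this
    linarith
  · -- properness
    rw [isProperMap_iff_isCompact_preimage]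
    refine ⟨hsmooth.continuous, fun K hK => ?_⟩
    obtain ⟨R0, hR0'⟩ := hK.isBounded.subset_closedBall 0
    set R := max R0 0 with hRdef
    have hR : K ⊆ Metric.closedBall 0 R :=
      hR0'.trans (Metric.closedBall_subset_closedBall (le_max_left _ _))
    have hR0 : 0 ≤ R := le_max_right _ _
    obtain ⟨M, hM⟩ := (htop.eventually_ge_atTop (R + 1)).exists_forall_of_atTop
    obtain ⟨M', hM'⟩ := (hbot.eventually_le_atBot (-(R + 1))).exists_forall_of_atBot
    have hsub2 : (fun p : ℝ × ℝ => ((p.2, gammaIG c v p) : ℝ × ℝ × ℝ)) ⁻¹' K ⊆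
        Icc (M' - R) (M + R) ×ˢ Icc (-R) R := by
      intro p hp
      have hmem : ((p.2, gammaIG c v p) : ℝ × ℝ × ℝ) ∈ Metric.closedBall 0 R := hR hp
      rw [Metric.mem_closedBall, dist_zero_right] at hmem
      have ht : |p.2| ≤ R := by
        rw [← Real.norm_eq_abs]
        exact le_trans (norm_fst_le ((p.2, gammaIG c v p) : ℝ × ℝ × ℝ)) hmem
      have hg1 : |(gammaIG c v p).1| ≤ R := by
        rw [← Real.norm_eq_abs]
        exact le_trans (norm_fst_le (gammaIG c v p)) (le_trans (norm_snd_le ((p.2, gammaIG c v p) : ℝ × ℝ × ℝ)) hmem)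
      rw [hGamma p] at hg1
      simp only at hg1
      have habs := abs_le.1 ht
      have hmono : StrictMono c1 :=
        strictMono_of_deriv_pos hpos
      constructor
      · -- bound p.1
        constructor
        · -- M' - R ≤ p.1
          by_contra hcon
          push_neg at hcon
          have h1 : p.1 + p.2 ≤ M' := by linarith
          have h2 : p.1 - p.2 ≤ M' := by linarith
          have := hM' _ h1; have := hM' _ h2
          have := abs_le.1 hg1
          linarith
        · by_contra hcon
          push_neg at hcon
          have h1 : M ≤ p.1 + p.2 := by linarith
          have h2 : M ≤ p.1 - p.2 := by linarith
          have := hM _ h1; have := hM _ h2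
          have := abs_le.1 hg1
          linarith
      · exact abs_le.1 ht
    exact ((isCompact_Icc.prod isCompact_Icc).of_isClosed_subset
      (hK.isClosed.preimage hsmooth.continuous) hsub2)
  · -- timelike
    intro p
    rw [hpds p, hpdt p]
    set A := D (p.1 + p.2)
    set B := D (p.1 - p.2)
    set P := v2 (p.1 + p.2)
    set Q := v2 (p.1 - p.2)
    have h1 : A ^ 2 + P ^ 2 = 1 := hconstraint (p.1 + p.2)
    have h2 : B ^ 2 + Q ^ 2 = 1 := hconstraint (p.1 - p.2)
    have hA : 0 < A := hpos (p.1 + p.2)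
    have hB : 0 < B := hpos (p.1 - p.2)
    simp only [nsq, dot2]
    nlinarith [sq_nonneg (P - Q), sq_nonneg (A + B), mul_pos hA hB,
      sq_nonneg ((A + B) ^ 2 + (P - Q) ^ 2), sq_nonneg (A * Q - B * P),
      sq_nonneg (A * B - P * Q)]
  · -- wave equation
    intro p; rw [hpdss p, hpdtt p]
  · -- line containment
    intro x
    obtain ⟨s, hs⟩ := hc1c.surjective htop hbot x
    exact ⟨(s, 0), by simp [hGamma (s, 0), hs]⟩
end
end

section
/- Let γ: ℝ² → ℝ² be the evolution by isothermal gauge of C¹ × C⁰ initial data (c,v), with ϑ, μ, α_±, β as defined. Suppose there exist s₁, s₂ ∈ ℝ with ϑ(s₂) − ϑ(s₁) > π. Then: (i) there exists (s₀,t₀) ∈ ℝ² with β(s₀,t₀) ∉ [0, 2π]; and (ii) if in addition c is proper (|c(s)| → ∞ as s → ±∞), then there exists a time t* ∈ ℝ such that sin(β(·,t*)/2) takes both positive and negative values, i.e. there exist p, q ∈ ℝ with sin(β(p,t*)/2) > 0 and sin(β(q,t*)/2) < 0. -/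
noncomputable section
open Real Set Filter MeasureTheory
open scoped ContDiff ENNReal

/-- The lift α₊ = ϑ + arcsin μ of a₊. -/
def alphaP (ϑ μ : ℝ → ℝ) (s : ℝ) : ℝ := ϑ s + Real.arcsin (μ s)
/-- The lift α₋ = ϑ − arcsin μ − π of a₋. -/
def alphaM (ϑ μ : ℝ → ℝ) (s : ℝ) : ℝ := ϑ s - Real.arcsin (μ s) - π
/-- β(s,t) = α₊(s+t) − α₋(s−t). -/
def betaIG (ϑ μ : ℝ → ℝ) (p : ℝ × ℝ) : ℝ := alphaP ϑ μ (p.1 + p.2) - alphaM ϑ μ (p.1 - p.2)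

/-- μ is the (signed) speed of v relative to the normal direction U₀^⊥:
v = μ·(−sin ϑ, cos ϑ) with |μ| < 1. -/
def IsVelocityLift (v : ℝ → ℝ × ℝ) (ϑ μ : ℝ → ℝ) : Prop :=
  ∀ s, |μ s| < 1 ∧ v s = μ s • ((-Real.sin (ϑ s), Real.cos (ϑ s)) : ℝ × ℝ)


namespace BetaAux

variable {c v : ℝ → ℝ × ℝ} {ϑ μ : ℝ → ℝ}

lemma nsq_nn (a : ℝ × ℝ) : 0 ≤ nsq a := by
  have h : nsq a = a.1 * a.1 + a.2 * a.2 := rfl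
  nlinarith [sq_nonneg a.1, sq_nonneg a.2]

lemma mu_eq (hμ : IsVelocityLift v ϑ μ) (s : ℝ) :
    μ s = (v s).1 * (-Real.sin (ϑ s)) + (v s).2 * Real.cos (ϑ s) := by
  obtain ⟨-, h⟩ := hμ s
  rw [h]
  simp [Prod.smul_def, smul_eq_mul]
  linear_combination (-(μ s)) * Real.sin_sq_add_cos_sq (ϑ s)

lemma mu_cont (hv : Continuous v) (hϑ : Continuous ϑ) (hμ : IsVelocityLift v ϑ μ) :
    Continuous μ := by
  have : Continuous fun s => (v s).1 * (-Real.sin (ϑ s)) + (v s).2 * Real.cos (ϑ s) := by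
    fun_prop
  exact this.congr fun s => (mu_eq hμ s).symm

lemma nsq_v_eq (hμ : IsVelocityLift v ϑ μ) (s : ℝ) : nsq (v s) = μ s ^ 2 := by
  obtain ⟨-, h⟩ := hμ s
  have h2 : nsq (v s) = (v s).1 * (v s).1 + (v s).2 * (v s).2 := rfl
  rw [h2, h]
  simp [Prod.smul_def, smul_eq_mul]
  linear_combination (μ s ^ 2) * Real.sin_sq_add_cos_sq (ϑ s)

lemma mu_lt (hμ : IsVelocityLift v ϑ μ) (s : ℝ) : |μ s| < 1 := (hμ s).1

lemma deriv_c_eq (hdata : IGData c v) (hlift : IsTangentLift c ϑ) (hμ : IsVelocityLift v ϑ μ)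
    (s : ℝ) :
    deriv c s = (Real.cos (Real.arcsin (μ s)) * Real.cos (ϑ s),
      Real.cos (Real.arcsin (μ s)) * Real.sin (ϑ s)) := by
  have hmu2 : μ s ^ 2 < 1 := (sq_lt_one_iff_abs_lt_one _).2 (hμ s).1
  have hnsq : nsq (deriv c s) = 1 - μ s ^ 2 := by
    have := hdata.hnorm s
    rw [nsq_v_eq hμ s] at this
    linarith
  have henorm : enorm2 (deriv c s) = Real.cos (Real.arcsin (μ s)) := by
    rw [Real.cos_arcsin]
    show Real.sqrt (nsq (deriv c s)) = _
    rw [hnsq]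
  have hpos : 0 < enorm2 (deriv c s) := by
    rw [henorm, Real.cos_arcsin]
    exact Real.sqrt_pos.2 (by linarith)
  have h := hlift.2 s
  have h2 : deriv c s = enorm2 (deriv c s) • ((Real.cos (ϑ s), Real.sin (ϑ s)) : ℝ × ℝ) := by
    rw [← h, smul_smul, mul_inv_cancel₀ hpos.ne', one_smul]
  rw [h2, henorm]
  simp [Prod.smul_def, smul_eq_mul]

lemma aplus_eq (hdata : IGData c v) (hlift : IsTangentLift c ϑ) (hμ : IsVelocityLift v ϑ μ)
    (s : ℝ) :
    aplus c v s = (Real.cos (alphaP ϑ μ s), Real.sin (alphaP ϑ μ s)) := by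
  have hm : |μ s| < 1 := (hμ s).1
  have hms : Real.sin (Real.arcsin (μ s)) = μ s :=
    Real.sin_arcsin (by cases abs_lt.1 hm; linarith) (by cases abs_lt.1 hm; linarith)
  obtain ⟨-, hvs⟩ := hμ s
  rw [aplus, hvs, deriv_c_eq hdata hlift hμ s]
  rw [alphaP]
  rw [Real.cos_add, Real.sin_add]
  simp [Prod.smul_def, smul_eq_mul, Prod.ext_iff, hms]
  constructor <;> ring

lemma aminus_eq (hdata : IGData c v) (hlift : IsTangentLift c ϑ) (hμ : IsVelocityLift v ϑ μ)
    (s : ℝ) :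
    aminus c v s = (Real.cos (alphaM ϑ μ s), Real.sin (alphaM ϑ μ s)) := by
  have hm : |μ s| < 1 := (hμ s).1
  have hms : Real.sin (Real.arcsin (μ s)) = μ s :=
    Real.sin_arcsin (by cases abs_lt.1 hm; linarith) (by cases abs_lt.1 hm; linarith)
  obtain ⟨-, hvs⟩ := hμ s
  rw [aminus, hvs, deriv_c_eq hdata hlift hμ s]
  rw [alphaM]
  rw [show ϑ s - Real.arcsin (μ s) - π = (ϑ s - Real.arcsin (μ s)) - π by ring,
    Real.cos_sub_pi, Real.sin_sub_pi, Real.cos_sub, Real.sin_sub]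
  simp [Prod.smul_def, smul_eq_mul, Prod.ext_iff, hms]
  constructor <;> ring

lemma norm_le_one_of_nsq {a : ℝ × ℝ} (h : nsq a ≤ 1) : ‖a‖ ≤ 1 := by
  have hd : nsq a = a.1 * a.1 + a.2 * a.2 := rfl
  have h1 : |a.1| ≤ 1 := by nlinarith [sq_nonneg a.1, sq_nonneg a.2, abs_nonneg a.1, sq_abs a.1]
  have h2 : |a.2| ≤ 1 := by nlinarith [sq_nonneg a.1, sq_nonneg a.2, abs_nonneg a.2, sq_abs a.2]
  rw [Prod.norm_def]
  simp [Real.norm_eq_abs]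
  exact ⟨h1, h2⟩

lemma enorm2_le (a : ℝ × ℝ) : enorm2 a ≤ 2 * ‖a‖ := by
  have hd : nsq a = a.1 * a.1 + a.2 * a.2 := rfl
  have h1 : |a.1| ≤ ‖a‖ := norm_fst_le a
  have h2 : |a.2| ≤ ‖a‖ := norm_snd_le a
  have hnn : (0:ℝ) ≤ 2 * ‖a‖ := by positivity
  rw [enorm2, show nsq a = a.1 * a.1 + a.2 * a.2 from rfl]
  rw [show a.1 * a.1 + a.2 * a.2 = |a.1| ^ 2 + |a.2| ^ 2 by rw [sq_abs, sq_abs]; ring]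
  calc Real.sqrt (|a.1| ^ 2 + |a.2| ^ 2) ≤ Real.sqrt ((2 * ‖a‖) ^ 2) := by
        apply Real.sqrt_le_sqrt
        nlinarith [abs_nonneg a.1, abs_nonneg a.2]
    _ = 2 * ‖a‖ := Real.sqrt_sq hnn

lemma bounded_of_null (hdata : IGData c v) (t : ℝ)
    (hnull : ∀ ζ : ℝ, aplus c v (ζ + t) = aminus c v (ζ - t)) :
    ∃ M : ℝ, ∀ x : ℝ, enorm2 (c x) ≤ M := by
  have hvnorm : ∀ z, ‖v z‖ ≤ 1 := fun z => norm_le_one_of_nsq (le_of_lt (hdata.hvlt z))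
  have hcnorm : ∀ z, ‖deriv c z‖ ≤ 1 := by
    intro z
    apply norm_le_one_of_nsq
    have := hdata.hnorm z
    have := nsq_nn (v z)
    linarith
  have hcdiff : Differentiable ℝ c := hdata.hc.differentiable one_ne_zero
  have hdc_cont : Continuous (deriv c) := hdata.hc.continuous_deriv le_rfl
  -- Lipschitz bound for c
  have hlipc : ∀ x y : ℝ, ‖c x - c y‖ ≤ |x - y| := by
    intro x y
    have hint : (∫ z in y..x, deriv c z) = c x - c y :=
      intervalIntegral.integral_deriv_eq_sub (fun z _ => hcdiff z) (hdc_cont.intervalIntegrable y x)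
    rw [← hint]
    calc ‖∫ z in y..x, deriv c z‖ ≤ 1 * |x - y| :=
          intervalIntegral.norm_integral_le_of_norm_le_const (fun z _ => hcnorm z)
      _ = |x - y| := one_mul _
  -- antiderivative of v
  set A : ℝ → ℝ × ℝ := fun x => ∫ ζ in (0:ℝ)..x, v ζ with hA
  have hAd : ∀ x : ℝ, HasDerivAt A (v x) x := by
    intro x
    exact intervalIntegral.integral_hasDerivAt_right (hdata.hv.intervalIntegrable 0 x)
      (hdata.hv.stronglyMeasurableAtFilter _ _) hdata.hv.continuousAt
  have hlipA : ∀ x y : ℝ, ‖A x - A y‖ ≤ |x - y| := by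
    intro x y
    have hint : A x - A y = ∫ z in y..x, v z :=
      intervalIntegral.integral_interval_sub_left (hdata.hv.intervalIntegrable 0 x)
        (hdata.hv.intervalIntegrable 0 y)
    rw [hint]
    calc ‖∫ z in y..x, v z‖ ≤ 1 * |x - y| :=
          intervalIntegral.norm_integral_le_of_norm_le_const (fun z _ => hvnorm z)
      _ = |x - y| := one_mul _
  -- the function g is constant
  set g : ℝ → ℝ × ℝ := fun ζ => (c (ζ + t) + A (ζ + t)) + (c (ζ - t) - A (ζ - t)) with hg
  have hgd : ∀ ζ : ℝ, HasDerivAt g 0 ζ := by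
    intro ζ
    have hshiftp : HasDerivAt (fun ζ : ℝ => ζ + t) 1 ζ := (hasDerivAt_id ζ).add_const t
    have hshiftm : HasDerivAt (fun ζ : ℝ => ζ - t) 1 ζ := (hasDerivAt_id ζ).sub_const t
    have h1 : HasDerivAt (fun ζ : ℝ => c (ζ + t)) (deriv c (ζ + t)) ζ := by
      have := HasDerivAt.scomp (𝕜 := ℝ) ζ ((hcdiff (ζ + t)).hasDerivAt) hshiftp
      simpa [Function.comp_def] using this
    have h2 : HasDerivAt (fun ζ : ℝ => A (ζ + t)) (v (ζ + t)) ζ := by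
      have := HasDerivAt.scomp (𝕜 := ℝ) ζ (hAd (ζ + t)) hshiftp
      simpa [Function.comp_def] using this
    have h3 : HasDerivAt (fun ζ : ℝ => c (ζ - t)) (deriv c (ζ - t)) ζ := by
      have := HasDerivAt.scomp (𝕜 := ℝ) ζ ((hcdiff (ζ - t)).hasDerivAt) hshiftm
      simpa [Function.comp_def] using this
    have h4 : HasDerivAt (fun ζ : ℝ => A (ζ - t)) (v (ζ - t)) ζ := by
      have := HasDerivAt.scomp (𝕜 := ℝ) ζ (hAd (ζ - t)) hshiftm
      simpa [Function.comp_def] using this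
    have htot := ((h1.add h2).add (h3.sub h4))
    have hzero : (deriv c (ζ + t) + v (ζ + t)) + (deriv c (ζ - t) - v (ζ - t)) = 0 := by
      have := hnull ζ
      rw [aplus, aminus] at this
      have h5 : v (ζ + t) + deriv c (ζ + t) = v (ζ - t) - deriv c (ζ - t) := this
      abel_nf
      abel_nf at h5
      linear_combination (norm := abel1) h5
    rw [hzero] at htot
    exact htot
  have hgconst : ∀ x : ℝ, g x = g 0 :=
    fun x => is_const_of_deriv_eq_zero (fun ζ => (hgd ζ).differentiableAt)
      (fun ζ => (hgd ζ).deriv) x 0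
  refine ⟨2 * (‖g 0‖ / 2 + 2 * |t|), ?_⟩
  intro x
  have hx := hgconst (x - t)
  have harg1 : x - t + t = x := by ring
  have harg2 : x - t - t = x - 2 * t := by ring
  rw [hg] at hx
  simp only [harg1, harg2] at hx
  -- hx : c x + A x + (c (x - 2t) - A (x - 2t)) = g 0
  have hg0 : g 0 = c (0 + t) + A (0 + t) + (c (0 - t) - A (0 - t)) := rfl
  have hsum : c x + c (x - 2 * t) = g 0 - (A x - A (x - 2 * t)) := by
    rw [hg0, ← hx]; abel
  have hsum_norm : ‖c x + c (x - 2 * t)‖ ≤ ‖g 0‖ + 2 * |t| := by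
    rw [hsum]
    calc ‖g 0 - (A x - A (x - 2 * t))‖ ≤ ‖g 0‖ + ‖A x - A (x - 2 * t)‖ := norm_sub_le _ _
      _ ≤ ‖g 0‖ + |x - (x - 2 * t)| := by linarith [hlipA x (x - 2 * t)]
      _ = ‖g 0‖ + 2 * |t| := by rw [show x - (x - 2 * t) = 2 * t by ring, abs_mul]; norm_num
  have hdiff_norm : ‖c x - c (x - 2 * t)‖ ≤ 2 * |t| := by
    calc ‖c x - c (x - 2 * t)‖ ≤ |x - (x - 2 * t)| := hlipc x (x - 2 * t)
      _ = 2 * |t| := by rw [show x - (x - 2 * t) = 2 * t by ring, abs_mul]; norm_num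
  have h2cx : (2:ℝ) • c x = (c x + c (x - 2 * t)) + (c x - c (x - 2 * t)) := by
    rw [two_smul]; abel
  have hcx : ‖c x‖ ≤ ‖g 0‖ / 2 + 2 * |t| := by
    have : ‖(2:ℝ) • c x‖ ≤ ‖g 0‖ + 2 * |t| + 2 * |t| := by
      rw [h2cx]
      calc ‖(c x + c (x - 2 * t)) + (c x - c (x - 2 * t))‖
          ≤ ‖c x + c (x - 2 * t)‖ + ‖c x - c (x - 2 * t)‖ := norm_add_le _ _
        _ ≤ ‖g 0‖ + 2 * |t| + 2 * |t| := by linarith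
    rw [norm_smul] at this
    simp [Real.norm_eq_abs] at this
    linarith
  calc enorm2 (c x) ≤ 2 * ‖c x‖ := enorm2_le (c x)
    _ ≤ 2 * (‖g 0‖ / 2 + 2 * |t|) := by linarith

end BetaAux

/-- If the tangent angle ϑ increases by more than π then β leaves
[0,2π] somewhere; if in addition c is proper, then at some time t* the function
sin(β(·,t*)/2) takes both positive and negative values. -/
theorem beta_sign_change
    (c v : ℝ → ℝ × ℝ) (hdata : IGData c v)
    (ϑ μ : ℝ → ℝ) (hlift : IsTangentLift c ϑ) (hμ : IsVelocityLift v ϑ μ)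
    (s₁ s₂ : ℝ) (harc : ϑ s₂ - ϑ s₁ > π) :
    (∃ p : ℝ × ℝ, betaIG ϑ μ p < 0 ∨ 2 * π < betaIG ϑ μ p) ∧
    ((Tendsto (fun s => enorm2 (c s)) atTop atTop ∧
        Tendsto (fun s => enorm2 (c s)) atBot atTop) →
      ∃ tstar p q : ℝ,
        0 < Real.sin (betaIG ϑ μ (p, tstar) / 2) ∧
        Real.sin (betaIG ϑ μ (q, tstar) / 2) < 0) := by
  have hπ : (0:ℝ) < π := Real.pi_pos
  have hb : ∀ u w : ℝ, betaIG ϑ μ ((u + w) / 2, (u - w) / 2)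
      = ϑ u + Real.arcsin (μ u) - (ϑ w - Real.arcsin (μ w) - π) := by
    intro u w
    have h0 : betaIG ϑ μ ((u + w) / 2, (u - w) / 2)
        = alphaP ϑ μ ((u + w) / 2 + (u - w) / 2) - alphaM ϑ μ ((u + w) / 2 - (u - w) / 2) := rfl
    have h1 : (u + w) / 2 + (u - w) / 2 = u := by ring
    have h2 : (u + w) / 2 - (u - w) / 2 = w := by ring
    rw [h0, h1, h2, alphaP, alphaM]
  have harc_lt : ∀ x : ℝ, Real.arcsin (μ x) < π / 2 :=
    fun x => Real.arcsin_lt_pi_div_two.2 (abs_lt.1 (hμ x).1).2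
  have harc_gt : ∀ x : ℝ, -(π / 2) < Real.arcsin (μ x) :=
    fun x => Real.neg_pi_div_two_lt_arcsin.2 (abs_lt.1 (hμ x).1).1
  constructor
  · by_contra hno
    push_neg at hno
    obtain ⟨-, h1b⟩ := hno ((s₂ + s₁) / 2, (s₂ - s₁) / 2)
    obtain ⟨h2a, -⟩ := hno ((s₁ + s₂) / 2, (s₁ - s₂) / 2)
    rw [hb s₂ s₁] at h1b
    rw [hb s₁ s₂] at h2a
    linarith
  · intro hprop
    have hϑc : Continuous ϑ := hlift.1
    have hμc : Continuous μ := BetaAux.mu_cont hdata.hv hϑc hμ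
    have haPc : Continuous (alphaP ϑ μ) := by
      have : Continuous fun s => ϑ s + Real.arcsin (μ s) :=
        hϑc.add (Real.continuous_arcsin.comp hμc)
      exact this
    have haMc : Continuous (alphaM ϑ μ) := by
      have : Continuous fun s => ϑ s - Real.arcsin (μ s) - π :=
        (hϑc.sub (Real.continuous_arcsin.comp hμc)).sub continuous_const
      exact this
    have hbc : ∀ s : ℝ, Continuous fun t => Real.sin (betaIG ϑ μ (s, t) / 2) := by
      intro s
      have h1 : Continuous fun t : ℝ => alphaP ϑ μ (s + t) - alphaM ϑ μ (s - t) :=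
        (haPc.comp (continuous_const.add continuous_id)).sub
          (haMc.comp (continuous_const.sub continuous_id))
      exact Real.continuous_sin.comp (h1.div_const 2)
    have hsinneg1 : ∀ x : ℝ, π < x → x < 2 * π → Real.sin x < 0 := by
      intro x h1 h2
      have h3 : 0 < Real.sin (x - π) := Real.sin_pos_of_pos_of_lt_pi (by linarith) (by linarith)
      rw [Real.sin_sub_pi] at h3; linarith
    have hsinneg2 : ∀ x : ℝ, -π < x → x < 0 → Real.sin x < 0 := by
      intro x h1 h2
      have h3 : 0 < Real.sin (-x) := Real.sin_pos_of_pos_of_lt_pi (by linarith) (by linarith)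
      rw [Real.sin_neg] at h3; linarith
    -- normalize the angle increment
    obtain ⟨s₃, hs₃1, hs₃2⟩ : ∃ s₃, π < ϑ s₃ - ϑ s₁ ∧ ϑ s₃ - ϑ s₁ < 3 * π / 2 := by
      by_cases hcase : ϑ s₂ - ϑ s₁ < 3 * π / 2
      · exact ⟨s₂, harc, hcase⟩
      · have hy : ϑ s₁ + 5 * π / 4 ∈ Set.uIcc (ϑ s₁) (ϑ s₂) := by
          rw [Set.mem_uIcc]; left; constructor <;> linarith
        obtain ⟨x, -, hx⟩ := intermediate_value_uIcc hϑc.continuousOn hy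
        exact ⟨x, by rw [hx]; linarith, by rw [hx]; linarith⟩
    -- a strictly negative value of sin(β/2)
    obtain ⟨sh, th, hneg⟩ : ∃ sh th : ℝ, Real.sin (betaIG ϑ μ (sh, th) / 2) < 0 := by
      by_cases hAB : π < (ϑ s₃ - ϑ s₁) + Real.arcsin (μ s₃) + Real.arcsin (μ s₁)
      · refine ⟨(s₃ + s₁) / 2, (s₃ - s₁) / 2, ?_⟩
        rw [hb s₃ s₁]
        exact hsinneg1 _ (by linarith [harc_lt s₃, harc_gt s₃, harc_lt s₁, harc_gt s₁])
          (by linarith [harc_lt s₃, harc_gt s₃, harc_lt s₁, harc_gt s₁])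
      · push_neg at hAB
        refine ⟨(s₁ + s₃) / 2, (s₁ - s₃) / 2, ?_⟩
        rw [hb s₁ s₃]
        exact hsinneg2 _ (by linarith [harc_lt s₃, harc_gt s₃, harc_lt s₁, harc_gt s₁])
          (by linarith [harc_lt s₃, harc_gt s₃, harc_lt s₁, harc_gt s₁])
    by_contra hcon
    push_neg at hcon
    -- the sets of times where sin(β/2) has a constant sign
    have hPclosed : IsClosed {t : ℝ | ∀ s, 0 ≤ Real.sin (betaIG ϑ μ (s, t) / 2)} := by
      have he : {t : ℝ | ∀ s, 0 ≤ Real.sin (betaIG ϑ μ (s, t) / 2)}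
          = ⋂ s : ℝ, {t : ℝ | 0 ≤ Real.sin (betaIG ϑ μ (s, t) / 2)} := by
        ext t; simp [Set.mem_iInter]
      rw [he]
      exact isClosed_iInter fun s => isClosed_le continuous_const (hbc s)
    have hNclosed : IsClosed {t : ℝ | ∀ s, Real.sin (betaIG ϑ μ (s, t) / 2) ≤ 0} := by
      have he : {t : ℝ | ∀ s, Real.sin (betaIG ϑ μ (s, t) / 2) ≤ 0}
          = ⋂ s : ℝ, {t : ℝ | Real.sin (betaIG ϑ μ (s, t) / 2) ≤ 0} := by
        ext t; simp [Set.mem_iInter]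
      rw [he]
      exact isClosed_iInter fun s => isClosed_le (hbc s) continuous_const
    have hcover : (Set.univ : Set ℝ) ⊆ {t : ℝ | ∀ s, 0 ≤ Real.sin (betaIG ϑ μ (s, t) / 2)}
        ∪ {t : ℝ | ∀ s, Real.sin (betaIG ϑ μ (s, t) / 2) ≤ 0} := by
      intro t _
      by_cases hex : ∃ p, 0 < Real.sin (betaIG ϑ μ (p, t) / 2)
      · left; intro s; obtain ⟨p, hp⟩ := hex; exact hcon t p s hp
      · right; intro s; push_neg at hex; exact hex s
    have hPne : (Set.univ ∩ {t : ℝ | ∀ s, 0 ≤ Real.sin (betaIG ϑ μ (s, t) / 2)}).Nonempty := by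
      refine ⟨0, trivial, ?_⟩
      intro s
      have h0 : betaIG ϑ μ (s, 0) = 2 * Real.arcsin (μ s) + π := by
        have : betaIG ϑ μ (s, 0) = alphaP ϑ μ (s + 0) - alphaM ϑ μ (s - 0) := rfl
        rw [this, add_zero, sub_zero, alphaP, alphaM]; ring
      rw [h0, show (2 * Real.arcsin (μ s) + π) / 2 = Real.arcsin (μ s) + π / 2 by ring,
        Real.sin_add_pi_div_two, Real.cos_arcsin]
      positivity
    have hNne : (Set.univ ∩ {t : ℝ | ∀ s, Real.sin (betaIG ϑ μ (s, t) / 2) ≤ 0}).Nonempty := by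
      rcases hcover (Set.mem_univ th) with h | h
      · exact absurd (h sh) (not_le.2 hneg)
      · exact ⟨th, trivial, h⟩
    obtain ⟨tc, -, hPc, hNc⟩ := isPreconnected_closed_iff.1 isPreconnected_univ _ _
      hPclosed hNclosed hcover hPne hNne
    have hzero : ∀ s, Real.sin (betaIG ϑ μ (s, tc) / 2) = 0 := fun s => le_antisymm (hNc s) (hPc s)
    have hnull : ∀ ζ : ℝ, aplus c v (ζ + tc) = aminus c v (ζ - tc) := by
      intro ζ
      obtain ⟨n, hn⟩ := Real.sin_eq_zero_iff.1 (hzero ζ)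
      have hβdef : betaIG ϑ μ (ζ, tc) = alphaP ϑ μ (ζ + tc) - alphaM ϑ μ (ζ - tc) := rfl
      have hβ : alphaP ϑ μ (ζ + tc) = alphaM ϑ μ (ζ - tc) + (n : ℝ) * (2 * π) := by
        rw [hβdef] at hn; linarith
      rw [BetaAux.aplus_eq hdata hlift hμ, BetaAux.aminus_eq hdata hlift hμ, hβ,
        Real.cos_add_int_mul_two_pi, Real.sin_add_int_mul_two_pi]
    obtain ⟨M, hM⟩ := BetaAux.bounded_of_null hdata tc hnull
    obtain ⟨x, hx⟩ := (hprop.1.eventually_gt_atTop M).exists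
    exact absurd (hM x) (not_le.2 hx)
end
end

section
/- Propagation of the isothermal gauge constraints: let c: ℝ → ℝ² be C¹ and v: ℝ → ℝ² continuous, with ⟨ċ(s), v(s)⟩ = 0 and |ċ(s)|² + |v(s)|² = 1 for all s, and define γ(s,t) = (1/2)( c(s+t) + c(s−t) + ∫_{s−t}^{s+t} v(ζ) dζ ). Then a_±(s) = v(s) ± ċ(s) are unit vectors, γ_s(s,t) = (1/2)( a_+(s+t) − a_-(s−t) ) and γ_t(s,t) = (1/2)( a_+(s+t) + a_-(s−t) ), and for ALL (s,t) ∈ ℝ²: ⟨γ_s(s,t), γ_t(s,t)⟩ = 0 and |γ_s(s,t)|² + |γ_t(s,t)|² = 1. -/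
noncomputable section
open Real Set Filter MeasureTheory
open scoped ContDiff ENNReal

/-- **propagation of the isothermal gauge constraints.** For C¹ × C⁰
data satisfying the constraints at t = 0, the d'Alembert evolution satisfies
γ_s = (a₊(s+t) − a₋(s−t))/2, γ_t = (a₊(s+t) + a₋(s−t))/2, and the gauge conditions
⟨γ_s,γ_t⟩ = 0 and |γ_s|² + |γ_t|² = 1 for all (s,t). -/
theorem gauge_constraints_propagate
    (c v : ℝ → ℝ × ℝ)
    (hc : ContDiff ℝ 1 c) (hv : Continuous v)
    (horth : ∀ s, dot2 (deriv c s) (v s) = 0)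
    (hnorm : ∀ s, nsq (deriv c s) + nsq (v s) = 1) :
    (∀ s : ℝ, nsq (aplus c v s) = 1 ∧ nsq (aminus c v s) = 1) ∧
    (∀ p : ℝ × ℝ, pds (gammaIG c v) p =
      (1 / 2 : ℝ) • (aplus c v (p.1 + p.2) - aminus c v (p.1 - p.2))) ∧
    (∀ p : ℝ × ℝ, pdt (gammaIG c v) p =
      (1 / 2 : ℝ) • (aplus c v (p.1 + p.2) + aminus c v (p.1 - p.2))) ∧
    (∀ p : ℝ × ℝ, dot2 (pds (gammaIG c v) p) (pdt (gammaIG c v) p) = 0) ∧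
    (∀ p : ℝ × ℝ, nsq (pds (gammaIG c v) p) + nsq (pdt (gammaIG c v) p) = 1) := by
  classical
  -- antiderivative of v
  set F : ℝ → ℝ × ℝ := fun x => ∫ ζ in (0:ℝ)..x, v ζ with hFdef
  have hF : ∀ x : ℝ, HasDerivAt F (v x) x := by
    intro x
    exact intervalIntegral.integral_hasDerivAt_right (hv.intervalIntegrable 0 x)
      (hv.stronglyMeasurableAtFilter _ _) hv.continuousAt
  have hcd : ∀ x : ℝ, HasDerivAt c (deriv c x) x := fun x =>
    ((hc.differentiable one_ne_zero) x).hasDerivAt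
  have hint : ∀ a b : ℝ, (∫ ζ in a..b, v ζ) = F b - F a := by
    intro a b
    rw [hFdef]
    exact (intervalIntegral.integral_interval_sub_left (hv.intervalIntegrable 0 b)
      (hv.intervalIntegrable 0 a)).symm
  have hγ : ∀ p : ℝ × ℝ, gammaIG c v p =
      (1 / 2 : ℝ) • (c (p.1 + p.2) + c (p.1 - p.2) + (F (p.1 + p.2) - F (p.1 - p.2))) := by
    intro p; rw [gammaIG, hint]
  -- unit norm of a±
  have hA : ∀ s : ℝ, nsq (aplus c v s) = 1 ∧ nsq (aminus c v s) = 1 := by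
    intro s
    have h1 := horth s
    have h2 := hnorm s
    simp only [nsq, dot2, aplus, aminus, Prod.fst_add, Prod.snd_add, Prod.fst_sub,
      Prod.snd_sub] at *
    constructor <;> nlinarith [h1, h2]
  -- partial derivative in s
  have hS : ∀ p : ℝ × ℝ, pds (gammaIG c v) p =
      (1 / 2 : ℝ) • (aplus c v (p.1 + p.2) - aminus c v (p.1 - p.2)) := by
    rintro ⟨s, t⟩
    have h1 : HasDerivAt (fun x : ℝ => c (x + t)) (deriv c (s + t)) s :=
      (hcd (s + t)).comp_add_const s t
    have h2 : HasDerivAt (fun x : ℝ => c (x - t)) (deriv c (s - t)) s :=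
      (hcd (s - t)).comp_sub_const s t
    have h3 : HasDerivAt (fun x : ℝ => F (x + t)) (v (s + t)) s :=
      (hF (s + t)).comp_add_const s t
    have h4 : HasDerivAt (fun x : ℝ => F (x - t)) (v (s - t)) s :=
      (hF (s - t)).comp_sub_const s t
    have h : HasDerivAt (fun x : ℝ => gammaIG c v (x, t))
        ((1 / 2 : ℝ) • (deriv c (s + t) + deriv c (s - t) + (v (s + t) - v (s - t)))) s := by
      have h5 := (((h1.add h2).add (h3.sub h4)).const_smul (1 / 2 : ℝ))
      refine h5.congr_of_eventuallyEq (Filter.Eventually.of_forall fun x => ?_)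
      simp [hγ (x, t)]
    have : pds (gammaIG c v) (s, t) =
        (1 / 2 : ℝ) • (deriv c (s + t) + deriv c (s - t) + (v (s + t) - v (s - t))) :=
      h.deriv
    rw [this]
    simp only [aplus, aminus]
    module
  -- partial derivative in t
  have hT : ∀ p : ℝ × ℝ, pdt (gammaIG c v) p =
      (1 / 2 : ℝ) • (aplus c v (p.1 + p.2) + aminus c v (p.1 - p.2)) := by
    rintro ⟨s, t⟩
    have h1 : HasDerivAt (fun y : ℝ => c (s + y)) (deriv c (s + t)) t :=
      (hcd (s + t)).comp_const_add s t
    have h2 : HasDerivAt (fun y : ℝ => c (s - y)) (-deriv c (s - t)) t :=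
      (hcd (s - t)).comp_const_sub s t
    have h3 : HasDerivAt (fun y : ℝ => F (s + y)) (v (s + t)) t :=
      (hF (s + t)).comp_const_add s t
    have h4 : HasDerivAt (fun y : ℝ => F (s - y)) (-v (s - t)) t :=
      (hF (s - t)).comp_const_sub s t
    have h : HasDerivAt (fun y : ℝ => gammaIG c v (s, y))
        ((1 / 2 : ℝ) • (deriv c (s + t) + -deriv c (s - t) + (v (s + t) - -v (s - t)))) t := by
      have h5 := (((h1.add h2).add (h3.sub h4)).const_smul (1 / 2 : ℝ))
      refine h5.congr_of_eventuallyEq (Filter.Eventually.of_forall fun y => ?_)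
      simp [hγ (s, y)]
    have : pdt (gammaIG c v) (s, t) =
        (1 / 2 : ℝ) • (deriv c (s + t) + -deriv c (s - t) + (v (s + t) - -v (s - t))) :=
      h.deriv
    rw [this]
    simp only [aplus, aminus]
    module
  refine ⟨hA, hS, hT, ?_, ?_⟩
  · intro p
    have h1 := (hA (p.1 + p.2)).1
    have h2 := (hA (p.1 - p.2)).2
    rw [hS p, hT p]
    set A := aplus c v (p.1 + p.2)
    set B := aminus c v (p.1 - p.2)
    simp only [nsq, dot2, Prod.smul_fst, Prod.smul_snd, Prod.fst_add, Prod.snd_add,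
      Prod.fst_sub, Prod.snd_sub, smul_eq_mul] at *
    nlinarith [h1, h2]
  · intro p
    have h1 := (hA (p.1 + p.2)).1
    have h2 := (hA (p.1 - p.2)).2
    rw [hS p, hT p]
    set A := aplus c v (p.1 + p.2)
    set B := aminus c v (p.1 - p.2)
    simp only [nsq, dot2, Prod.smul_fst, Prod.smul_snd, Prod.fst_add, Prod.snd_add,
      Prod.fst_sub, Prod.snd_sub, smul_eq_mul] at *
    nlinarith [h1, h2]
end
end

section
/- Mixed-norm curvature blow-up rate for the shrinking circle: the surface φ(s,t) = (t, cos t cos s, cos t sin s), (s,t) ∈ ℝ × (−π/2, π/2), is a timelike immersion with vanishing mean curvature whose cross-sections γ(·,t) are circles of curvature |k(s,t)| = 1/cos t, with arclength element dσ = cos t ds. For all p, q ∈ (1, ∞), the mixed norm ‖k‖_{L^q((0,π/2); L^p(dσ))} = ( ∫₀^{π/2} ( ∫₀^{2π} (1/cos t)^p · cos t ds )^{q/p} dt )^{1/q} equals (2π)^{1/p} ( ∫₀^{π/2} (cos t)^{q(1−p)/p} dt )^{1/q}, and this is finite if and only if 1/p + 1/q > 1. -/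
noncomputable section
open Real Set Filter MeasureTheory
open scoped ENNReal ContDiff

/-- 2×2 determinant of a pair of plane vectors. -/
def det2 (a b : ℝ × ℝ) : ℝ := a.1 * b.2 - a.2 * b.1

/-- The shrinking circle: γ(s,t) = (cos t cos s, cos t sin s). -/
def circGamma (p : ℝ × ℝ) : ℝ × ℝ :=
  (Real.cos p.2 * Real.cos p.1, Real.cos p.2 * Real.sin p.1)

/-- Signed curvature of the cross-section γ(·,t). -/
def circK (s t : ℝ) : ℝ :=
  det2 (pds circGamma (s, t)) (pdss circGamma (s, t)) /
    (enorm2 (pds circGamma (s, t))) ^ 3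

/-! ### Auxiliary lemmas -/

lemma pds_eq (s t : ℝ) :
    pds circGamma (s, t) = (Real.cos t * -Real.sin s, Real.cos t * Real.cos s) := by
  have h : HasDerivAt (fun x : ℝ => circGamma (x, t))
      (Real.cos t * -Real.sin s, Real.cos t * Real.cos s) s :=
    ((Real.hasDerivAt_cos s).const_mul (Real.cos t)).prodMk
      ((Real.hasDerivAt_sin s).const_mul (Real.cos t))
  simpa [pds] using h.deriv

lemma pdt_eq (s t : ℝ) :
    pdt circGamma (s, t) = (-Real.sin t * Real.cos s, -Real.sin t * Real.sin s) := by
  have h : HasDerivAt (fun y : ℝ => circGamma (s, y))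
      (-Real.sin t * Real.cos s, -Real.sin t * Real.sin s) t :=
    ((Real.hasDerivAt_cos t).mul_const (Real.cos s)).prodMk
      ((Real.hasDerivAt_cos t).mul_const (Real.sin s))
  simpa [pdt] using h.deriv

lemma pdss_eq (s t : ℝ) :
    pdss circGamma (s, t) = (Real.cos t * -Real.cos s, Real.cos t * -Real.sin s) := by
  have he : (fun x : ℝ => pds circGamma (x, t)) =
      fun x => (Real.cos t * -Real.sin x, Real.cos t * Real.cos x) :=
    funext fun x => pds_eq x t
  have h : HasDerivAt (fun x : ℝ => (Real.cos t * -Real.sin x, Real.cos t * Real.cos x))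
      (Real.cos t * -Real.cos s, Real.cos t * -Real.sin s) s := by
    have h1 : HasDerivAt (fun x : ℝ => Real.cos t * -Real.sin x) (Real.cos t * -Real.cos s) s :=
      (((Real.hasDerivAt_sin s).neg).const_mul (Real.cos t))
    have h2 : HasDerivAt (fun x : ℝ => Real.cos t * Real.cos x) (Real.cos t * -Real.sin s) s :=
      ((Real.hasDerivAt_cos s).const_mul (Real.cos t))
    exact h1.prodMk h2
  rw [pdss]
  simpa [he] using h.deriv

lemma pdtt_eq (s t : ℝ) :
    pdtt circGamma (s, t) = (-Real.cos t * Real.cos s, -Real.cos t * Real.sin s) := by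
  have he : (fun y : ℝ => pdt circGamma (s, y)) =
      fun y => (-Real.sin y * Real.cos s, -Real.sin y * Real.sin s) :=
    funext fun y => pdt_eq s y
  have h : HasDerivAt (fun y : ℝ => (-Real.sin y * Real.cos s, -Real.sin y * Real.sin s))
      (-Real.cos t * Real.cos s, -Real.cos t * Real.sin s) t :=
    (((Real.hasDerivAt_sin t).neg).mul_const (Real.cos s)).prodMk
      (((Real.hasDerivAt_sin t).neg).mul_const (Real.sin s))
  rw [pdtt]
  simpa [he] using h.deriv

lemma cos_pos_mem {t : ℝ} (ht : t ∈ Set.Ioo (0:ℝ) (π/2)) : 0 < Real.cos t :=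
  Real.cos_pos_of_mem_Ioo ⟨by linarith [ht.1, Real.pi_pos], ht.2⟩

lemma meas_cos_rpow (a : ℝ) :
    Measurable (fun t : ℝ => Real.exp (Real.log (Real.cos t) * a)) :=
  (Real.measurable_exp.comp ((Real.measurable_log.comp Real.measurable_cos).mul measurable_const))

lemma cos_lb {t : ℝ} (ht : t ∈ Set.Ioo (0:ℝ) (π/2)) :
    2 / π * (π / 2 - t) ≤ Real.cos t := by
  have := Real.mul_le_sin (x := π / 2 - t) (by linarith [ht.2]) (by linarith [ht.1])
  rwa [Real.sin_pi_div_two_sub] at this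

lemma cos_ub {t : ℝ} (ht : t ∈ Set.Ioo (0:ℝ) (π/2)) : Real.cos t ≤ π / 2 - t := by
  have := Real.sin_le (x := π / 2 - t) (by linarith [ht.2])
  rwa [Real.sin_pi_div_two_sub] at this

lemma refl_integrable_iff (a : ℝ) :
    IntegrableOn (fun t : ℝ => (π / 2 - t) ^ a) (Set.Ioo 0 (π / 2)) ↔
      IntegrableOn (fun u : ℝ => u ^ a) (Set.Ioo 0 (π / 2)) := by
  have hle : (0:ℝ) ≤ π / 2 := by positivity
  constructor
  · intro h
    have h1 : IntervalIntegrable (fun t : ℝ => (π / 2 - t) ^ a) volume 0 (π / 2) := by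
      rwa [intervalIntegrable_iff_integrableOn_Ioo_of_le hle]
    have h2 := (h1.comp_sub_left (π / 2)).symm
    simp only [sub_self, sub_zero, sub_sub_cancel] at h2
    rwa [intervalIntegrable_iff_integrableOn_Ioo_of_le hle] at h2
  · intro h
    have h1 : IntervalIntegrable (fun u : ℝ => u ^ a) volume 0 (π / 2) := by
      rwa [intervalIntegrable_iff_integrableOn_Ioo_of_le hle]
    have h2 := (h1.comp_sub_left (π / 2)).symm
    simp only [sub_self, sub_zero] at h2
    rwa [intervalIntegrable_iff_integrableOn_Ioo_of_le hle] at h2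

lemma aesm_cos_rpow (a : ℝ) : AEStronglyMeasurable (fun t : ℝ => Real.cos t ^ a)
    (volume.restrict (Set.Ioo 0 (π / 2))) := by
  refine (meas_cos_rpow a).aestronglyMeasurable.congr ?_
  filter_upwards [ae_restrict_mem measurableSet_Ioo] with t ht
  exact (Real.rpow_def_of_pos (cos_pos_mem ht) a).symm

lemma aesm_refl_rpow (a : ℝ) : AEStronglyMeasurable (fun t : ℝ => (π / 2 - t) ^ a)
    (volume.restrict (Set.Ioo 0 (π / 2))) := by
  have hm : Measurable (fun t : ℝ => Real.exp (Real.log (π / 2 - t) * a)) :=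
    Real.measurable_exp.comp ((Real.measurable_log.comp
      (measurable_const.sub measurable_id)).mul measurable_const)
  refine hm.aestronglyMeasurable.congr ?_
  filter_upwards [ae_restrict_mem measurableSet_Ioo] with t ht
  exact (Real.rpow_def_of_pos (by linarith [ht.2] : (0:ℝ) < π / 2 - t) a).symm

lemma cos_rpow_integrableOn_iff {a : ℝ} (ha : a < 0) :
    IntegrableOn (fun t : ℝ => Real.cos t ^ a) (Set.Ioo 0 (π / 2)) ↔ -1 < a := by
  constructor
  · intro h
    by_contra hle
    push_neg at hle
    have hInt : IntegrableOn (fun t : ℝ => (π / 2 - t) ^ a) (Set.Ioo 0 (π / 2)) := by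
      refine h.mono' (aesm_refl_rpow a) ?_
      filter_upwards [ae_restrict_mem measurableSet_Ioo] with t ht
      rw [Real.norm_eq_abs, abs_of_nonneg (Real.rpow_nonneg (by linarith [ht.2]) a)]
      exact Real.rpow_le_rpow_of_nonpos (cos_pos_mem ht) (cos_ub ht) ha.le
    have := (refl_integrable_iff a).mp hInt
    rw [intervalIntegral.integrableOn_Ioo_rpow_iff (by positivity)] at this
    linarith
  · intro h
    have hInt : IntegrableOn (fun t : ℝ => (π / 2 - t) ^ a) (Set.Ioo 0 (π / 2)) :=
      (refl_integrable_iff a).mpr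
        ((intervalIntegral.integrableOn_Ioo_rpow_iff (by positivity)).mpr h)
    refine (hInt.const_mul ((2 / π) ^ a : ℝ)).mono' (aesm_cos_rpow a) ?_
    filter_upwards [ae_restrict_mem measurableSet_Ioo] with t ht
    rw [Real.norm_eq_abs, abs_of_nonneg (Real.rpow_nonneg (cos_pos_mem ht).le a)]
    calc Real.cos t ^ a ≤ (2 / π * (π / 2 - t)) ^ a :=
          Real.rpow_le_rpow_of_nonpos
            (mul_pos (by positivity) (by linarith [ht.2])) (cos_lb ht) ha.le
      _ = (2 / π) ^ a * (π / 2 - t) ^ a :=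
          Real.mul_rpow (by positivity) (by linarith [ht.2])

lemma cos_rpow_lintegral_lt_top_iff {a : ℝ} (ha : a < 0) :
    (∫⁻ t in Set.Ioo (0:ℝ) (π / 2), ENNReal.ofReal (Real.cos t ^ a)) < ⊤ ↔ -1 < a := by
  have hnn : 0 ≤ᵐ[volume.restrict (Set.Ioo (0:ℝ) (π / 2))] fun t => Real.cos t ^ a := by
    filter_upwards [ae_restrict_mem measurableSet_Ioo] with t ht
    exact Real.rpow_nonneg (cos_pos_mem ht).le a
  rw [← cos_rpow_integrableOn_iff ha, IntegrableOn,
    ← lintegral_ofReal_ne_top_iff_integrable (aesm_cos_rpow a) hnn, lt_top_iff_ne_top]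

lemma inner_int (p : ℝ) {t : ℝ} (ht : t ∈ Set.Ioo (0:ℝ) (π/2)) :
    (∫⁻ s in Set.Ioo (0 : ℝ) (2 * π), ENNReal.ofReal ((1 / Real.cos t) ^ p * Real.cos t)) =
      ENNReal.ofReal (2 * π) * ENNReal.ofReal (Real.cos t ^ (1 - p)) := by
  have hc := cos_pos_mem ht
  have hval : (1 / Real.cos t) ^ p * Real.cos t = Real.cos t ^ (1 - p) := by
    rw [Real.rpow_sub hc, Real.rpow_one, Real.div_rpow zero_le_one hc.le, Real.one_rpow]
    field_simp
  rw [setLIntegral_const, hval, Real.volume_Ioo, sub_zero, mul_comm]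

lemma outer_eq (p q : ℝ) (hp : 1 < p) (hq : 1 < q) :
    (∫⁻ t in Set.Ioo (0 : ℝ) (π / 2),
        (∫⁻ s in Set.Ioo (0 : ℝ) (2 * π),
          ENNReal.ofReal ((1 / Real.cos t) ^ p * Real.cos t)) ^ (q / p)) ^ (1 / q) =
      (ENNReal.ofReal (2 * π)) ^ (1 / p) *
        (∫⁻ t in Set.Ioo (0 : ℝ) (π / 2),
          ENNReal.ofReal ((Real.cos t) ^ (q * (1 - p) / p))) ^ (1 / q) := by
  have hp0 : (0:ℝ) < p := by linarith
  have hq0 : (0:ℝ) < q := by linarith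
  have hqp : (0:ℝ) ≤ q / p := by positivity
  have key : (∫⁻ t in Set.Ioo (0 : ℝ) (π / 2),
      (∫⁻ s in Set.Ioo (0 : ℝ) (2 * π),
        ENNReal.ofReal ((1 / Real.cos t) ^ p * Real.cos t)) ^ (q / p)) =
      (ENNReal.ofReal (2 * π)) ^ (q / p) *
        ∫⁻ t in Set.Ioo (0 : ℝ) (π / 2),
          ENNReal.ofReal ((Real.cos t) ^ (q * (1 - p) / p)) := by
    rw [← lintegral_const_mul' _ _ (ENNReal.rpow_ne_top_of_nonneg hqp ENNReal.ofReal_ne_top)]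
    refine setLIntegral_congr_fun measurableSet_Ioo (fun t ht => ?_)
    have hc := cos_pos_mem ht
    rw [inner_int p ht, ENNReal.mul_rpow_of_nonneg _ _ hqp,
      ENNReal.ofReal_rpow_of_pos (Real.rpow_pos_of_pos hc _), ← Real.rpow_mul hc.le]
    congr 2
    field_simp
  rw [key, ENNReal.mul_rpow_of_nonneg _ _ (by positivity : (0:ℝ) ≤ 1 / q),
    ← ENNReal.rpow_mul]
  congr 2
  field_simp

/-- The shrinking circle φ(s,t) = (t, cos t cos s, cos t sin s)
is a timelike maximal immersion on ℝ × (−π/2, π/2) whose cross-sections have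
curvature 1/cos t and arclength element cos t ds, and its mixed L^q L^p curvature
norm is finite iff 1/p + 1/q > 1. -/
theorem shrinking_circle_curvature_mixed_norm :
    (∀ s : ℝ, ∀ t ∈ Set.Ioo (-(π / 2)) (π / 2),
      dot2 (pds circGamma (s, t)) (pdt circGamma (s, t)) = 0 ∧
      nsq (pds circGamma (s, t)) + nsq (pdt circGamma (s, t)) = 1 ∧
      pdtt circGamma (s, t) = pdss circGamma (s, t) ∧
      pds circGamma (s, t) ≠ 0 ∧
      nsq (pds circGamma (s, t)) * (nsq (pdt circGamma (s, t)) - 1) -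
        (dot2 (pds circGamma (s, t)) (pdt circGamma (s, t))) ^ 2 < 0) ∧
    (∀ s : ℝ, ∀ t ∈ Set.Ioo (0 : ℝ) (π / 2),
      |circK s t| = 1 / Real.cos t ∧ enorm2 (pds circGamma (s, t)) = Real.cos t) ∧
    (∀ p q : ℝ, 1 < p → 1 < q →
      ((∫⁻ t in Set.Ioo (0 : ℝ) (π / 2),
          (∫⁻ s in Set.Ioo (0 : ℝ) (2 * π),
            ENNReal.ofReal ((1 / Real.cos t) ^ p * Real.cos t)) ^ (q / p)) ^ (1 / q) =
        (ENNReal.ofReal (2 * π)) ^ (1 / p) *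
          (∫⁻ t in Set.Ioo (0 : ℝ) (π / 2),
            ENNReal.ofReal ((Real.cos t) ^ (q * (1 - p) / p))) ^ (1 / q)) ∧
      ((∫⁻ t in Set.Ioo (0 : ℝ) (π / 2),
          (∫⁻ s in Set.Ioo (0 : ℝ) (2 * π),
            ENNReal.ofReal ((1 / Real.cos t) ^ p * Real.cos t)) ^ (q / p)) ^ (1 / q) < ⊤
        ↔ 1 / p + 1 / q > 1)) := by
  refine ⟨?_, ?_, ?_⟩
  · intro s t ht
    have hc : 0 < Real.cos t := Real.cos_pos_of_mem_Ioo ⟨ht.1, ht.2⟩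
    have hps : Real.sin s ^ 2 + Real.cos s ^ 2 = 1 := Real.sin_sq_add_cos_sq s
    have hpt : Real.sin t ^ 2 + Real.cos t ^ 2 = 1 := Real.sin_sq_add_cos_sq t
    have h3 : dot2 (pds circGamma (s, t)) (pdt circGamma (s, t)) = 0 := by
      simp only [dot2, pds_eq, pdt_eq]; ring
    have h1 : nsq (pds circGamma (s, t)) = Real.cos t ^ 2 := by
      simp only [nsq, dot2, pds_eq]; nlinarith
    have h2 : nsq (pdt circGamma (s, t)) = Real.sin t ^ 2 := by
      simp only [nsq, dot2, pdt_eq]; nlinarith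
    refine ⟨h3, ?_, ?_, ?_, ?_⟩
    · rw [h1, h2]; linarith
    · rw [pdtt_eq, pdss_eq]
      simp only [Prod.mk.injEq]
      constructor <;> ring
    · intro hzero
      rw [pds_eq, Prod.ext_iff] at hzero
      simp only [Prod.fst_zero, Prod.snd_zero] at hzero
      nlinarith [hzero.1, hzero.2]
    · rw [h1, h2, h3]
      have h4 : 0 < Real.cos t ^ 2 * Real.cos t ^ 2 := by positivity
      nlinarith
  · intro s t ht
    have hc : 0 < Real.cos t := cos_pos_mem ht
    have hps : Real.sin s ^ 2 + Real.cos s ^ 2 = 1 := Real.sin_sq_add_cos_sq s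
    have hnorm : enorm2 (pds circGamma (s, t)) = Real.cos t := by
      have : nsq (pds circGamma (s, t)) = Real.cos t ^ 2 := by
        simp only [nsq, dot2, pds_eq]
        nlinarith
      rw [enorm2, this, Real.sqrt_sq hc.le]
    refine ⟨?_, hnorm⟩
    have hdet : det2 (pds circGamma (s, t)) (pdss circGamma (s, t)) = Real.cos t ^ 2 := by
      simp only [det2, pds_eq, pdss_eq]
      nlinarith
    have : circK s t = 1 / Real.cos t := by
      rw [circK, hdet, hnorm]
      field_simp
    rw [this, abs_of_pos (by positivity)]
  · intro p q hp hq
    have hp0 : (0:ℝ) < p := by linarith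
    have hq0 : (0:ℝ) < q := by linarith
    refine ⟨outer_eq p q hp hq, ?_⟩
    rw [outer_eq p q hp hq]
    have ha : q * (1 - p) / p < 0 := by
      apply div_neg_of_neg_of_pos _ hp0
      nlinarith
    have hCne : (ENNReal.ofReal (2 * π)) ^ (1 / p) ≠ 0 := by
      refine (ENNReal.rpow_pos ?_ ENNReal.ofReal_ne_top).ne'
      exact ENNReal.ofReal_pos.mpr (by positivity)
    have hCnt : (ENNReal.ofReal (2 * π)) ^ (1 / p) ≠ ⊤ :=
      ENNReal.rpow_ne_top_of_nonneg (by positivity) ENNReal.ofReal_ne_top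
    have hmul : (ENNReal.ofReal (2 * π)) ^ (1 / p) *
        (∫⁻ t in Set.Ioo (0 : ℝ) (π / 2),
          ENNReal.ofReal ((Real.cos t) ^ (q * (1 - p) / p))) ^ (1 / q) < ⊤ ↔
        (∫⁻ t in Set.Ioo (0 : ℝ) (π / 2),
          ENNReal.ofReal ((Real.cos t) ^ (q * (1 - p) / p))) ^ (1 / q) < ⊤ := by
      constructor
      · intro h
        by_contra h'
        rw [not_lt, top_le_iff] at h'
        rw [h', ENNReal.mul_top hCne] at h
        exact absurd h (lt_irrefl _)
      · intro h
        exact ENNReal.mul_lt_top hCnt.lt_top h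
    rw [hmul, ENNReal.rpow_lt_top_iff_of_pos (by positivity : (0:ℝ) < 1 / q),
      cos_rpow_lintegral_lt_top_iff ha]
    rw [gt_iff_lt, div_add_div _ _ (ne_of_gt hp0) (ne_of_gt hq0),
      lt_div_iff₀ (mul_pos hp0 hq0), lt_div_iff₀ hp0]
    constructor <;> intro h <;> nlinarith
end
end
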